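/- arXiv:2402.02177 — 6 statements merged into one kernel-verified Lean document; each statement's English description precedes it below -/
import Mathlib

section
/- Let G be a finite group and A an abelian subgroup of G. Then there exists a characteristic abelian subgroup N of G such that the index [G:N] is at most [G:A]^2. -/
open Subgroup

private noncomputable def cdm {G : Type*} [Group G] (H : Subgroup G) : ℕ :=
  Nat.card H * Nat.card (centralizer (H : Set G))

private lemma cdm_pos {G : Type*} [Group G] [Finite G] (H : Subgroup G) : 0 < cdm H :=
  Nat.mul_pos Nat.card_pos Nat.card_pos

private lemma cd_card_mul_relindex {G : Type*} [Group G] [Finite G] {H K : Subgroup G}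
    (h : H ≤ K) : Nat.card H * H.relIndex K = Nat.card K := by
  have := Subgroup.card_mul_index (H.subgroupOf K)
  rw [show Nat.card (H.subgroupOf K) = Nat.card H from
    Nat.card_congr (Subgroup.subgroupOfEquivOfLe h).toEquiv] at this
  exact this

private lemma cd_card_prod_le {G : Type*} [Group G] [Finite G] (H K : Subgroup G) :
    Nat.card H * Nat.card K ≤ Nat.card ↥(H ⊓ K) * Nat.card ↥(H ⊔ K) := by
  have h1 : Nat.card ↥(H ⊓ K) * (H ⊓ K).relIndex H = Nat.card H :=
    cd_card_mul_relindex inf_le_left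
  have h2 : Nat.card K * K.relIndex (H ⊔ K) = Nat.card ↥(H ⊔ K) :=
    cd_card_mul_relindex le_sup_right
  have h3 : (H ⊓ K).relIndex H = K.relIndex H := Subgroup.inf_relIndex_left _ _
  have hne : K.relIndex (H ⊔ K) ≠ 0 := Subgroup.index_ne_zero_of_finite
  have h4 : K.relIndex H ≤ K.relIndex (H ⊔ K) :=
    Subgroup.relIndex_le_of_le_right le_sup_left hne
  calc Nat.card H * Nat.card K
      = (Nat.card ↥(H ⊓ K) * (K.relIndex H)) * Nat.card K := by rw [← h3, h1]
    _ ≤ (Nat.card ↥(H ⊓ K) * K.relIndex (H ⊔ K)) * Nat.card K := by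
        exact Nat.mul_le_mul_right _ (Nat.mul_le_mul_left _ h4)
    _ = Nat.card ↥(H ⊓ K) * Nat.card ↥(H ⊔ K) := by
        rw [mul_assoc, mul_comm (K.relIndex (H ⊔ K)), h2]

private lemma cd_centralizer_sup {G : Type*} [Group G] (H K : Subgroup G) :
    centralizer ((H ⊔ K : Subgroup G) : Set G)
      = centralizer (H : Set G) ⊓ centralizer (K : Set G) := by
  apply le_antisymm
  · exact le_inf (centralizer_le (SetLike.coe_subset_coe.mpr le_sup_left))
      (centralizer_le (SetLike.coe_subset_coe.mpr le_sup_right))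
  · rw [le_centralizer_iff]
    refine sup_le ?_ ?_
    · exact le_trans (le_centralizer_iff.mpr le_rfl)
        (centralizer_le (SetLike.coe_subset_coe.mpr inf_le_left))
    · exact le_trans (le_centralizer_iff.mpr le_rfl)
        (centralizer_le (SetLike.coe_subset_coe.mpr inf_le_right))

private lemma cd_centralizer_comap {G : Type*} [Group G] (φ : G ≃* G) (H : Subgroup G) :
    centralizer ((H.comap φ.toMonoidHom : Subgroup G) : Set G)
      = (centralizer (H : Set G)).comap φ.toMonoidHom := by
  ext x
  simp only [mem_comap, mem_centralizer_iff, SetLike.mem_coe]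
  constructor
  · intro h y hy
    have h1 := h (φ.symm y) (by simpa using hy)
    have h2 := congrArg φ h1
    simpa using h2
  · intro h y hy
    have := h (φ y) hy
    exact φ.injective (by simpa using this)

private lemma cd_card_comap {G : Type*} [Group G] (φ : G ≃* G) (H : Subgroup G) :
    Nat.card ↥(H.comap φ.toMonoidHom) = Nat.card H := by
  refine Nat.card_congr ⟨fun x => ⟨φ x.1, x.2⟩, fun y => ⟨φ.symm y.1, ?_⟩, ?_, ?_⟩
  · simp only [Subgroup.mem_comap, MulEquiv.coe_toMonoidHom, MulEquiv.apply_symm_apply]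
    exact y.2
  · intro x; ext; simp
  · intro y; ext; simp

private lemma cdm_comap {G : Type*} [Group G] (φ : G ≃* G) (H : Subgroup G) :
    cdm (H.comap φ.toMonoidHom) = cdm H := by
  unfold cdm
  rw [cd_centralizer_comap, cd_card_comap, cd_card_comap]

private lemma cdm_centralizer_ge {G : Type*} [Group G] [Finite G] (H : Subgroup G) :
    cdm H ≤ cdm (centralizer (H : Set G)) := by
  have hCC : H ≤ centralizer ((centralizer (H : Set G) : Subgroup G) : Set G) :=
    le_centralizer_iff.mpr le_rfl
  have h := Subgroup.card_le_of_le hCC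
  calc cdm H = Nat.card H * Nat.card (centralizer (H : Set G)) := rfl
    _ ≤ Nat.card (centralizer ((centralizer (H : Set G) : Subgroup G) : Set G)) *
          Nat.card (centralizer (H : Set G)) := Nat.mul_le_mul_right _ h
    _ = cdm (centralizer (H : Set G)) := mul_comm _ _

private lemma cdm_inf_ge {G : Type*} [Group G] [Finite G] (H K : Subgroup G) :
    cdm H * cdm K ≤ cdm (H ⊓ K) * cdm (H ⊔ K) := by
  have h1 : Nat.card H * Nat.card K ≤ Nat.card ↥(H ⊓ K) * Nat.card ↥(H ⊔ K) :=
    cd_card_prod_le H K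
  have h2 : Nat.card (centralizer (H : Set G)) * Nat.card (centralizer (K : Set G)) ≤
      Nat.card ↥(centralizer (H : Set G) ⊓ centralizer (K : Set G)) *
      Nat.card ↥(centralizer (H : Set G) ⊔ centralizer (K : Set G)) :=
    cd_card_prod_le _ _
  have h3 : centralizer (H : Set G) ⊔ centralizer (K : Set G) ≤
      centralizer ((H ⊓ K : Subgroup G) : Set G) := by
    refine sup_le (centralizer_le ?_) (centralizer_le ?_)
    · exact SetLike.coe_subset_coe.mpr inf_le_left
    · exact SetLike.coe_subset_coe.mpr inf_le_right
  have h3' : Nat.card ↥(centralizer (H : Set G) ⊔ centralizer (K : Set G)) ≤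
      Nat.card (centralizer ((H ⊓ K : Subgroup G) : Set G)) := Subgroup.card_le_of_le h3
  have h4 : Nat.card ↥(centralizer (H : Set G) ⊓ centralizer (K : Set G)) =
      Nat.card (centralizer ((H ⊔ K : Subgroup G) : Set G)) := by
    rw [cd_centralizer_sup]
  calc cdm H * cdm K
      = (Nat.card H * Nat.card K) *
        (Nat.card (centralizer (H : Set G)) * Nat.card (centralizer (K : Set G))) := by
        unfold cdm; ring
    _ ≤ (Nat.card ↥(H ⊓ K) * Nat.card ↥(H ⊔ K)) *
        (Nat.card ↥(centralizer (H : Set G) ⊓ centralizer (K : Set G)) *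
         Nat.card ↥(centralizer (H : Set G) ⊔ centralizer (K : Set G))) :=
        Nat.mul_le_mul h1 h2
    _ ≤ (Nat.card ↥(H ⊓ K) * Nat.card ↥(H ⊔ K)) *
        (Nat.card (centralizer ((H ⊔ K : Subgroup G) : Set G)) *
         Nat.card (centralizer ((H ⊓ K : Subgroup G) : Set G))) := by
        rw [h4]; exact Nat.mul_le_mul_left _ (Nat.mul_le_mul_left _ h3')
    _ = cdm (H ⊓ K) * cdm (H ⊔ K) := by unfold cdm; ring

set_option maxHeartbeats 1000000 in
/-- Let `G` be a finite group and `A` an abelian subgroup of `G`. Then there exists a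
characteristic abelian subgroup `N` of `G` with `[G:N] ≤ [G:A]^2`. -/
theorem stmt_0 {G : Type*} [Group G] [Finite G] (A : Subgroup G) (hA : IsMulCommutative A) :
    ∃ N : Subgroup G, N.Characteristic ∧ IsMulCommutative N ∧ N.index ≤ A.index ^ 2 := by
  classical
  obtain ⟨H₀, hH₀⟩ := Finite.exists_max (cdm (G := G))
  have hmxpos : 0 < cdm H₀ := cdm_pos H₀
  -- closure of max-measure subgroups under intersection
  have key : ∀ H K : Subgroup G, cdm H = cdm H₀ → cdm K = cdm H₀ → cdm (H ⊓ K) = cdm H₀ := by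
    intro H K hH hK
    have hbig : cdm H₀ * cdm H₀ ≤ cdm (H ⊓ K) * cdm (H ⊔ K) := by
      have h := cdm_inf_ge H K
      rwa [hH, hK] at h
    have hsup : cdm (H ⊔ K) ≤ cdm H₀ := hH₀ _
    have hge : cdm H₀ ≤ cdm (H ⊓ K) := by
      refine Nat.le_of_mul_le_mul_right ?_ hmxpos
      calc cdm H₀ * cdm H₀ ≤ cdm (H ⊓ K) * cdm (H ⊔ K) := hbig
        _ ≤ cdm (H ⊓ K) * cdm H₀ := Nat.mul_le_mul_left _ hsup
    exact le_antisymm (hH₀ _) hge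
  -- the Chermak–Delgado subgroup
  have : Fintype (Subgroup G) := Fintype.ofFinite _
  set S : Finset (Subgroup G) := Finset.univ.filter (fun H => cdm H = cdm H₀) with hS
  have hS0 : H₀ ∈ S := by simp [hS]
  have hSne : S.Nonempty := ⟨H₀, hS0⟩
  set M : Subgroup G := S.inf' hSne id with hMdef
  have hM : cdm M = cdm H₀ :=
    Finset.inf'_mem (s := {H : Subgroup G | cdm H = cdm H₀})
      (fun x hx y hy => key x y hx hy) S hSne id
      (fun i hi => (Finset.mem_filter.mp hi).2)
  have hMmin : ∀ K : Subgroup G, cdm K = cdm H₀ → M ≤ K := fun K hK =>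
    Finset.inf'_le id (by simp [hS, hK])
  refine ⟨M, ?_, ?_, ?_⟩
  · rw [Subgroup.characteristic_iff_comap_eq]
    intro φ
    have h1 : M ≤ M.comap φ.toMonoidHom := hMmin _ (by rw [cdm_comap φ M, hM])
    have h2 : M ≤ M.comap φ.symm.toMonoidHom := hMmin _ (by rw [cdm_comap φ.symm M, hM])
    refine le_antisymm ?_ h1
    have h3 := Subgroup.comap_mono (f := φ.toMonoidHom) h2
    rwa [Subgroup.comap_comap, show φ.symm.toMonoidHom.comp φ.toMonoidHom = MonoidHom.id G by
      ext x; simp, Subgroup.comap_id] at h3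
  · have hCmax : cdm (centralizer (M : Set G)) = cdm H₀ :=
      le_antisymm (hH₀ _) (hM ▸ cdm_centralizer_ge M)
    exact le_centralizer_iff_isMulCommutative.mp (hMmin _ hCmax)
  · -- index bound
    have hAC : A ≤ centralizer (A : Set G) := le_centralizer_iff_isMulCommutative.mpr hA
    have hmA : Nat.card A * Nat.card A ≤ cdm A :=
      Nat.mul_le_mul_left _ (Subgroup.card_le_of_le hAC)
    have hMle : cdm A ≤ cdm M := by rw [hM]; exact hH₀ A
    have hCG : Nat.card (centralizer (M : Set G)) ≤ Nat.card G :=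
      Nat.card_le_card_of_injective _ Subtype.val_injective
    have key2 : M.index * (Nat.card A * Nat.card A)
        ≤ A.index ^ 2 * (Nat.card A * Nat.card A) := by
      calc M.index * (Nat.card A * Nat.card A)
          ≤ M.index * cdm M := Nat.mul_le_mul_left _ (le_trans hmA hMle)
        _ = M.index * Nat.card M * Nat.card (centralizer (M : Set G)) := by
            unfold cdm; ring
        _ ≤ M.index * Nat.card M * Nat.card G := Nat.mul_le_mul_left _ hCG
        _ = Nat.card G * Nat.card G := by rw [Subgroup.index_mul_card]
        _ = (A.index * Nat.card A) * (A.index * Nat.card A) := by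
            rw [Subgroup.index_mul_card]
        _ = A.index ^ 2 * (Nat.card A * Nat.card A) := by ring
    have hApos : 0 < Nat.card A * Nat.card A := Nat.mul_pos Nat.card_pos Nat.card_pos
    exact Nat.le_of_mul_le_mul_right key2 hApos
end

section
/- Let n ≥ 3 with n ≠ 6 be an integer, and let A be a finite abelian group. Then any group G fitting into a short exact sequence 1 → S_n → G → A → 1 (where S_n is the symmetric group on n letters) is isomorphic to the direct product S_n × A. -/
open Equiv Equiv.Perm Subgroup Multiset


private lemma fact_ineq : ∀ j : ℕ, 2 ^ (j + 3) * (j + 4).factorial < (2 * j + 6).factorial := by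
  intro j
  induction j with
  | zero => norm_num [Nat.factorial]
  | succ j ih =>
    have h1 : (2 * (j + 1) + 6) = (2 * j + 6) + 2 := by ring
    have h2 : (2 * (j+1) + 6).factorial = (2*j+8) * ((2*j+7) * (2*j+6).factorial) := by
      rw [h1]
      show ((2*j+6)+2).factorial = _
      rw [Nat.factorial_succ, Nat.factorial_succ]
    have h3 : 2 ^ (j + 1 + 3) * (j + 1 + 4).factorial
        = (2 * (j + 5)) * (2 ^ (j+3) * (j+4).factorial) := by
      rw [show j+1+4 = (j+4)+1 by ring, Nat.factorial_succ, pow_succ]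
      ring
    rw [h2, h3]
    calc (2 * (j + 5)) * (2 ^ (j+3) * (j+4).factorial)
        < (2 * (j + 5)) * ((2*j+6).factorial) := by
          exact Nat.mul_lt_mul_of_pos_left ih (by positivity)
      _ ≤ (2*j+8) * ((2*j+7) * (2*j+6).factorial) := by
          have : 2 * (j+5) ≤ (2*j+8)*(2*j+7) := by nlinarith
          calc (2 * (j + 5)) * ((2*j+6).factorial) ≤ ((2*j+8)*(2*j+7)) * ((2*j+6).factorial) :=
                Nat.mul_le_mul_right _ this
            _ = _ := by ring

private lemma num_key {n k : ℕ} (hn6 : n ≠ 6) (hk : 1 ≤ k) (h2k : 2 * k ≤ n)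
    (heq : 2 * (n - 2).factorial = 2 ^ k * k.factorial * (n - 2 * k).factorial) : k = 1 := by
  by_contra hk1
  have hk2 : 2 ≤ k := by omega
  have hn4 : 4 ≤ n := by omega
  set D := (n - 2).descFactorial (2 * k - 2) with hD
  have hfac : (n - 2 * k).factorial * D = (n - 2).factorial := by
    have := Nat.factorial_mul_descFactorial (n := n - 2) (k := 2 * k - 2) (by omega)
    rwa [show n - 2 - (2 * k - 2) = n - 2 * k by omega] at this
  have hDval : 2 * D = 2 ^ k * k.factorial := by
    have h' : (n - 2*k).factorial * (2 * D) = (n - 2*k).factorial * (2 ^ k * k.factorial) := by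
      calc (n - 2*k).factorial * (2 * D) = 2 * ((n - 2*k).factorial * D) := by ring
        _ = 2 * (n-2).factorial := by rw [hfac]
        _ = 2 ^ k * k.factorial * (n - 2*k).factorial := heq
        _ = (n - 2*k).factorial * (2 ^ k * k.factorial) := by ring
    exact Nat.eq_of_mul_eq_mul_left (Nat.factorial_pos _) h'
  rcases Nat.lt_or_ge k 4 with hk4 | hk4
  · interval_cases k
    · -- k = 2
      obtain ⟨a, rfl⟩ : ∃ a, n = a + 4 := ⟨n - 4, by omega⟩
      have : D = (a + 1) * ((a + 2) * 1) := by
        simp [hD, Nat.descFactorial]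
      rw [this] at hDval
      norm_num [Nat.factorial] at hDval
      rcases a with _ | a
      · omega
      · nlinarith
    · -- k = 3
      have hn7 : 7 ≤ n := by omega
      have hD4 : D = (n - 2).descFactorial 4 := by rw [hD]
      have h120 : (120 : ℕ) ≤ D := by
        rw [hD4]
        simpa [Nat.descFactorial] using
          Nat.descFactorial_le (m := n - 2) 4 (show 5 ≤ n - 2 by omega)
      norm_num [Nat.factorial] at hDval
      omega
  · -- k ≥ 4
    have hle : (2 * k - 2).factorial ≤ D := by
      rw [← Nat.descFactorial_self]
      apply Nat.descFactorial_le
      omega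
    obtain ⟨j, rfl⟩ : ∃ j, k = j + 4 := ⟨k - 4, by omega⟩
    have := fact_ineq j
    rw [show 2 * (j + 4) - 2 = 2 * j + 6 by omega] at hle
    have hDval' : D = 2 ^ (j+3) * (j+4).factorial := by
      have h2 : 2 * D = 2 * (2 ^ (j+3) * (j+4).factorial) := by
        rw [hDval, pow_succ]; ring
      omega
    omega

private lemma zmod2_cases (i : ZMod 2) : i = 0 ∨ i = 1 := by revert i; decide
private lemma zmod2_add (i : ZMod 2) : i + 1 + 1 = i := by revert i; decide
private lemma zmod2_ne (i : ZMod 2) : i + 1 ≠ i := by revert i; decide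

/-- the model involution with `k` two-cycles -/
private def sig0 (k m : ℕ) : Perm ((Fin k × ZMod 2) ⊕ Fin m) where
  toFun z := z.map (fun q => (q.1, q.2 + 1)) id
  invFun z := z.map (fun q => (q.1, q.2 + 1)) id
  left_inv := by rintro (⟨a, i⟩ | b) <;> simp [zmod2_add]
  right_inv := by rintro (⟨a, i⟩ | b) <;> simp [zmod2_add]

@[simp] private lemma sig0_inl (k m : ℕ) (a : Fin k) (i : ZMod 2) :
    sig0 k m (Sum.inl (a, i)) = Sum.inl (a, i + 1) := rfl

@[simp] private lemma sig0_inr (k m : ℕ) (b : Fin m) : sig0 k m (Sum.inr b) = Sum.inr b := rfl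

private lemma sig0_sq (k m : ℕ) : sig0 k m * sig0 k m = 1 := by
  ext z
  rcases z with ⟨a, i⟩ | b <;> simp [Perm.mul_apply, zmod2_add]

private lemma sig0_ne_one (k m : ℕ) (hk : 1 ≤ k) : sig0 k m ≠ 1 := by
  intro h
  have := congrArg (fun σ : Perm _ => σ (Sum.inl (⟨0, hk⟩, 0))) h
  simpa using this

private lemma sig0_support (k m : ℕ) : (sig0 k m).support.card = 2 * k := by
  classical
  have : (sig0 k m).support
      = Finset.univ.map ⟨Sum.inl, Sum.inl_injective⟩ := by
    ext z
    rcases z with ⟨a, i⟩ | b <;>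
      simp [Perm.mem_support, zmod2_ne]
  rw [this]
  simp [Fintype.card_prod]
  ring

/-- the centralizing permutations in the model -/
private def psi (k m : ℕ) (p : Perm (Fin k)) (g : Fin k → ZMod 2) (h : Perm (Fin m)) :
    Perm ((Fin k × ZMod 2) ⊕ Fin m) where
  toFun z := z.map (fun q => (p q.1, q.2 + g q.1)) h
  invFun z := z.map (fun q => (p.symm q.1, q.2 - g (p.symm q.1))) h.symm
  left_inv := by rintro (⟨a, i⟩ | b) <;> simp
  right_inv := by rintro (⟨a, i⟩ | b) <;> simp

@[simp] private lemma psi_inl (k m : ℕ) (p : Perm (Fin k)) (g : Fin k → ZMod 2)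
    (h : Perm (Fin m)) (a : Fin k) (i : ZMod 2) :
    psi k m p g h (Sum.inl (a, i)) = Sum.inl (p a, i + g a) := rfl

@[simp] private lemma psi_inr (k m : ℕ) (p : Perm (Fin k)) (g : Fin k → ZMod 2)
    (h : Perm (Fin m)) (b : Fin m) : psi k m p g h (Sum.inr b) = Sum.inr (h b) := rfl

private lemma psi_commute (k m : ℕ) (p : Perm (Fin k)) (g : Fin k → ZMod 2) (h : Perm (Fin m)) :
    Commute (psi k m p g h) (sig0 k m) := by
  unfold Commute SemiconjBy
  ext z
  rcases z with ⟨a, i⟩ | b <;> simp [Perm.mul_apply]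
  ring

private lemma card_commute_model (k m : ℕ) :
    Nat.card {τ : Perm ((Fin k × ZMod 2) ⊕ Fin m) // Commute τ (sig0 k m)}
      = 2 ^ k * k.factorial * m.factorial := by
  classical
  have hbij : Function.Bijective
      (fun x : Perm (Fin k) × (Fin k → ZMod 2) × Perm (Fin m) =>
        (⟨psi k m x.1 x.2.1 x.2.2, psi_commute k m x.1 x.2.1 x.2.2⟩ :
          {τ : Perm ((Fin k × ZMod 2) ⊕ Fin m) // Commute τ (sig0 k m)})) := by
    constructor
    · rintro ⟨p, g, h⟩ ⟨p', g', h'⟩ hpg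
      simp only [Subtype.mk.injEq] at hpg
      have h1 : ∀ a : Fin k, p a = p' a ∧ g a = g' a := by
        intro a
        have := congrArg (fun σ : Perm _ => σ (Sum.inl (a, 0))) hpg
        simp at this
        exact ⟨this.1, this.2⟩
      have h2 : ∀ b : Fin m, h b = h' b := by
        intro b
        have := congrArg (fun σ : Perm _ => σ (Sum.inr b)) hpg
        simpa using this
      refine Prod.ext ?_ (Prod.ext ?_ ?_)
      · exact Equiv.ext fun a => (h1 a).1
      · exact funext fun a => (h1 a).2
      · exact Equiv.ext h2
    · rintro ⟨τ, hτ⟩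
      have hτ' : ∀ z, τ (sig0 k m z) = sig0 k m (τ z) := by
        intro z
        have := congrFun (congrArg (fun σ : Perm _ => (σ : _ → _)) hτ) z
        simpa [Perm.mul_apply] using this
      -- inr goes to inr
      have hinr : ∀ b : Fin m, ∃ b', τ (Sum.inr b) = Sum.inr b' := by
        intro b
        rcases hb : τ (Sum.inr b) with ⟨a, i⟩ | b'
        · exfalso
          have := hτ' (Sum.inr b)
          rw [sig0_inr, hb] at this
          simp at this
        · exact ⟨b', rfl⟩
      choose h0 hh0 using hinr
      have h0inj : Function.Injective h0 := by
        intro b b' hbb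
        have : τ (Sum.inr b) = τ (Sum.inr b') := by rw [hh0, hh0, hbb]
        simpa using τ.injective this
      have h0surj : Function.Surjective h0 := Finite.surjective_of_injective h0inj
      -- inl goes to inl
      have hinl : ∀ a : Fin k, ∃ a' j, τ (Sum.inl (a, 0)) = Sum.inl (a', j) := by
        intro a
        rcases ha : τ (Sum.inl (a, 0)) with ⟨a', j⟩ | b
        · exact ⟨a', j, rfl⟩
        · exfalso
          obtain ⟨b', hb'⟩ := h0surj b
          have : τ (Sum.inl (a, 0)) = τ (Sum.inr b') := by rw [ha, hh0, hb']
          simpa using τ.injective this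
      choose p0 g hp using hinl
      have hstep : ∀ (a : Fin k) (i : ZMod 2), τ (Sum.inl (a, i)) = Sum.inl (p0 a, i + g a) := by
        intro a i
        rcases zmod2_cases i with rfl | rfl
        · simpa using hp a
        · have h01 : (Sum.inl (a, (1 : ZMod 2)) : (Fin k × ZMod 2) ⊕ Fin m)
              = sig0 k m (Sum.inl (a, 0)) := by simp
          rw [h01, hτ' (Sum.inl (a, 0)), hp a, sig0_inl]
          rw [add_comm]
      have p0inj : Function.Injective p0 := by
        intro a a' haa
        have heq : τ (Sum.inl (a, g a' - g a)) = τ (Sum.inl (a', 0)) := by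
          rw [hstep, hstep, haa, zero_add, sub_add_cancel]
        have h2 := Sum.inl_injective (τ.injective heq)
        exact congrArg Prod.fst h2
      have p0surj : Function.Surjective p0 := Finite.surjective_of_injective p0inj
      refine ⟨⟨Equiv.ofBijective p0 ⟨p0inj, p0surj⟩, g, Equiv.ofBijective h0 ⟨h0inj, h0surj⟩⟩, ?_⟩
      apply Subtype.ext
      apply Equiv.ext
      rintro (⟨a, i⟩ | b)
      · simp [hstep]; rfl
      · simp [hh0]; rfl
  rw [← Nat.card_congr (Equiv.ofBijective _ hbij)]
  simp [Nat.card_eq_fintype_card, Fintype.card_perm, ZMod.card]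
  ring

/-- permCongr as a MulEquiv -/
private def permCongrMul {α β : Type*} (e : α ≃ β) : Perm α ≃* Perm β :=
  { e.permCongr with
    map_mul' := by
      intro σ τ
      apply Equiv.ext
      intro x
      simp [Equiv.permCongr_apply, Perm.mul_apply] }

@[simp] private lemma permCongrMul_apply {α β : Type*} (e : α ≃ β) (σ : Perm α) (x : β) :
    permCongrMul e σ x = e (σ (e.symm x)) := rfl

private lemma support_permCongrMul {α β : Type*} [DecidableEq α] [Fintype α] [DecidableEq β]
    [Fintype β] (e : α ≃ β) (σ : Perm α) :
    (permCongrMul e σ).support = σ.support.map e.toEmbedding := by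
  ext x
  simp only [Perm.mem_support, permCongrMul_apply, Finset.mem_map, Equiv.toEmbedding_apply]
  constructor
  · intro h
    refine ⟨e.symm x, fun hfix => h ?_, by simp⟩
    rw [hfix]
    simp
  · rintro ⟨y, hy, rfl⟩
    rw [Equiv.symm_apply_apply]
    intro hcon
    exact hy (e.injective hcon)

/-- commuting-set transport along a MulEquiv -/
private def commuteEquiv {M N : Type*} [Monoid M] [Monoid N] (φ : M ≃* N) (a : M) :
    {τ : M // Commute τ a} ≃ {τ : N // Commute τ (φ a)} :=
  φ.toEquiv.subtypeEquiv (fun τ => by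
    constructor
    · intro h
      have := congrArg φ h
      simpa [map_mul, Commute, SemiconjBy] using this
    · intro h
      apply φ.injective
      simpa [map_mul, Commute, SemiconjBy] using h)

private lemma exists_cycleType_replicate {α : Type*} [Fintype α] [DecidableEq α] {σ : Perm α}
    (h2 : σ * σ = 1) (h1 : σ ≠ 1) :
    ∃ c, σ.cycleType = Multiset.replicate c 2 ∧ σ.support.card = 2 * c := by
  have horder : orderOf σ = 2 := by
    haveI : Fact (Nat.Prime 2) := ⟨Nat.prime_two⟩
    exact orderOf_eq_prime (by rw [pow_two]; exact h2) h1
  obtain ⟨c, hc⟩ := Equiv.Perm.cycleType_prime_order (by rw [horder]; exact Nat.prime_two)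
  rw [horder] at hc
  refine ⟨c + 1, hc, ?_⟩
  have := σ.sum_cycleType
  rw [hc, Multiset.sum_replicate, smul_eq_mul] at this
  omega

private lemma cent_card {n k : ℕ} (hk : 1 ≤ k) (σ : Perm (Fin n))
    (h : σ.cycleType = Multiset.replicate k 2) :
    2 * k ≤ n ∧ Nat.card {τ : Perm (Fin n) // Commute τ σ}
      = 2 ^ k * k.factorial * (n - 2 * k).factorial := by
  classical
  have hsupp : σ.support.card = 2 * k := by
    have := σ.sum_cycleType
    rw [h, Multiset.sum_replicate, smul_eq_mul] at this
    omega
  have h2k : 2 * k ≤ n := by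
    have := Finset.card_le_univ σ.support
    rw [Fintype.card_fin] at this
    omega
  refine ⟨h2k, ?_⟩
  set m := n - 2 * k with hm
  have hcard : Fintype.card (Fin n) = Fintype.card ((Fin k × ZMod 2) ⊕ Fin m) := by
    simp only [Fintype.card_sum, Fintype.card_prod, Fintype.card_fin, ZMod.card]
    omega
  obtain e0 := Fintype.equivOfCardEq hcard
  set σ' := permCongrMul e0 σ with hσ'
  -- σ' has the same cycle type data
  have hσ'sq : σ' * σ' = 1 := by
    rw [hσ', ← map_mul]
    have hsq : σ * σ = 1 := by
      have h1 : orderOf σ ∣ 2 := by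
        rw [← Equiv.Perm.lcm_cycleType, h]
        apply Multiset.lcm_dvd.mpr
        intro x hx
        rw [Multiset.eq_of_mem_replicate hx]
      have := orderOf_dvd_iff_pow_eq_one.mp h1
      rwa [pow_two] at this
    rw [hsq, map_one]
  have hσ'ne : σ' ≠ 1 := by
    intro hcon
    have : σ = 1 := by
      have := congrArg (permCongrMul e0).symm hcon
      simpa [hσ'] using this
    rw [this, Equiv.Perm.cycleType_one] at h
    have hk0 : k = 0 := by simpa using congrArg Multiset.card h.symm
    omega
  have hσ'supp : σ'.support.card = 2 * k := by
    rw [hσ', support_permCongrMul, Finset.card_map, hsupp]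
  obtain ⟨c, hc, hcsupp⟩ := exists_cycleType_replicate hσ'sq hσ'ne
  have hck : c = k := by omega
  rw [hck] at hc
  -- sig0 has the same cycle type
  obtain ⟨c', hc', hc'supp⟩ :=
    exists_cycleType_replicate (sig0_sq k m) (sig0_ne_one k m hk)
  have hc'k : c' = k := by
    have := sig0_support k m
    omega
  rw [hc'k] at hc'
  -- conjugate
  have hconj : IsConj (sig0 k m) σ' := by
    apply Equiv.Perm.isConj_of_cycleType_eq
    rw [hc, hc']
  obtain ⟨w, hw⟩ := isConj_iff.mp hconj
  have key : Nat.card {τ : Perm ((Fin k × ZMod 2) ⊕ Fin m) // Commute τ σ'}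
      = 2 ^ k * k.factorial * m.factorial := by
    rw [← card_commute_model k m]
    apply Nat.card_congr
    have := commuteEquiv (MulAut.conj w) (sig0 k m)
    simp only [MulAut.conj_apply] at this
    rw [hw] at this
    exact this.symm
  rw [← key]
  apply Nat.card_congr
  exact commuteEquiv (permCongrMul e0) σ

private lemma cycleType_of_isSwap {n : ℕ} {s : Perm (Fin n)} (hs : s.IsSwap) :
    s.cycleType = Multiset.replicate 1 2 := by
  obtain ⟨a, b, hab, rfl⟩ := hs
  have hc : (Equiv.swap a b).IsCycle := isCycle_swap hab
  rw [hc.cycleType, card_support_swap hab]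
  rfl

private lemma isSwap_map {n : ℕ} (hn6 : n ≠ 6) (e : Perm (Fin n) ≃* Perm (Fin n))
    {s : Perm (Fin n)} (hs : s.IsSwap) : (e s).IsSwap := by
  classical
  have hscy := cycleType_of_isSwap hs
  have hsne : s ≠ 1 := by
    obtain ⟨a, b, hab, rfl⟩ := hs
    intro hcon
    apply hab
    have := congrArg (fun σ : Perm (Fin n) => σ a) hcon
    simpa [Equiv.swap_apply_left] using this.symm
  have hesq : e s * e s = 1 := by
    rw [← map_mul]
    obtain ⟨a, b, hab, rfl⟩ := hs
    rw [swap_mul_self, map_one]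
  have hesne : e s ≠ 1 := by
    intro hcon
    exact hsne (by simpa using e.injective (by rw [hcon, map_one]))
  obtain ⟨c, hc, hcsupp⟩ := exists_cycleType_replicate hesq hesne
  have hc1 : 1 ≤ c := by
    rcases Nat.eq_zero_or_pos c with h0 | h1
    · exfalso
      rw [h0] at hc
      simp at hc
      exact hsne hc
    · exact h1
  obtain ⟨h2s, hcard_s⟩ := cent_card (le_refl 1) s hscy
  obtain ⟨h2c, hcard_c⟩ := cent_card hc1 (e s) hc
  have hcards : Nat.card {τ : Perm (Fin n) // Commute τ s}
      = Nat.card {τ : Perm (Fin n) // Commute τ (e s)} :=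
    Nat.card_congr (commuteEquiv e s)
  rw [hcard_s, hcard_c] at hcards
  have hkey : 2 * (n - 2).factorial = 2 ^ c * c.factorial * (n - 2 * c).factorial := by
    calc 2 * (n - 2).factorial = 2 ^ 1 * Nat.factorial 1 * (n - 2 * 1).factorial := by norm_num
      _ = 2 ^ c * c.factorial * (n - 2 * c).factorial := hcards
  have hc1' : c = 1 := num_key hn6 hc1 h2c hkey
  rw [hc1'] at hc
  rw [← Equiv.Perm.card_support_eq_two]
  have := (e s).sum_cycleType
  rw [hc, Multiset.sum_replicate, smul_eq_mul] at this
  omega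

private lemma commute_swap_of_disjoint {α : Type*} [DecidableEq α] {u v p q : α}
    (h1 : u ≠ p) (h2 : u ≠ q) (h3 : v ≠ p) (h4 : v ≠ q) :
    Commute (Equiv.swap u v) (Equiv.swap p q) := by
  apply Equiv.Perm.Disjoint.commute
  intro x
  by_cases hx : x = u ∨ x = v
  · right
    rcases hx with rfl | rfl
    · exact swap_apply_of_ne_of_ne h1 h2
    · exact swap_apply_of_ne_of_ne h3 h4
  · left
    push_neg at hx
    exact swap_apply_of_ne_of_ne hx.1 hx.2

private lemma swap_noncomm_shape {α : Type*} [DecidableEq α] {a b c d : α}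
    (hab : a ≠ b) (hcd : c ≠ d) (h : ¬ Commute (Equiv.swap a b) (Equiv.swap c d)) :
    ∃ p q r, p ≠ q ∧ p ≠ r ∧ q ≠ r ∧
      Equiv.swap a b = Equiv.swap p q ∧ Equiv.swap c d = Equiv.swap p r := by
  have hne : Equiv.swap a b ≠ Equiv.swap c d := by
    intro hh
    exact h (hh ▸ Commute.refl _)
  have hin : a = c ∨ a = d ∨ b = c ∨ b = d := by
    by_contra hno
    push_neg at hno
    exact h (commute_swap_of_disjoint hno.1 hno.2.1 hno.2.2.1 hno.2.2.2)
  rcases hin with rfl | rfl | rfl | rfl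
  · -- a = c
    refine ⟨a, b, d, hab, hcd, ?_, rfl, rfl⟩
    intro hbd
    exact hne (by rw [hbd])
  · -- a = d
    refine ⟨a, b, c, hab, fun hh => hcd (hh.symm), ?_, rfl, (Equiv.swap_comm c a)⟩
    intro hbc
    exact hne (by rw [hbc, Equiv.swap_comm])
  · -- b = c
    refine ⟨b, a, d, fun hh => hab hh.symm, hcd, ?_, Equiv.swap_comm a b, rfl⟩
    intro had
    exact hne (by rw [had, Equiv.swap_comm])
  · -- b = d
    refine ⟨b, a, c, fun hh => hab hh.symm, fun hh => hcd hh.symm, ?_,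
      Equiv.swap_comm a b, Equiv.swap_comm c b⟩
    intro hac
    exact hne (by rw [hac])

private lemma isSwap_eq_swap_of_moves {α : Type*} [DecidableEq α] {s : Perm α}
    (hs : s.IsSwap) {x : α} (hx : s x ≠ x) : s = Equiv.swap x (s x) := by
  obtain ⟨a, b, hab, rfl⟩ := hs
  have hxab : x = a ∨ x = b := by
    by_contra hno
    push_neg at hno
    exact hx (swap_apply_of_ne_of_ne hno.1 hno.2)
  rcases hxab with rfl | rfl
  · rw [swap_apply_left]
  · rw [swap_apply_right, Equiv.swap_comm]

private lemma triple_swap {α : Type*} [DecidableEq α] {p q r : α}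
    (hpq : p ≠ q) (hpr : p ≠ r) (hqr : q ≠ r) :
    Equiv.swap p q * Equiv.swap p r * Equiv.swap q r = Equiv.swap p r := by
  ext z
  simp only [Perm.mul_apply]
  by_cases hzp : z = p
  · rw [hzp]
    rw [swap_apply_of_ne_of_ne hpq hpr, Equiv.swap_apply_left p r]
    exact swap_apply_of_ne_of_ne hpr.symm hqr.symm
  by_cases hzq : z = q
  · rw [hzq]
    rw [Equiv.swap_apply_left q r, Equiv.swap_apply_right p r,
      swap_apply_of_ne_of_ne hpq.symm hqr]
    exact Equiv.swap_apply_left p q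
  by_cases hzr : z = r
  · rw [hzr]
    rw [Equiv.swap_apply_right q r, Equiv.swap_apply_right p r,
      swap_apply_of_ne_of_ne hpq.symm hqr]
    exact Equiv.swap_apply_right p q
  · rw [swap_apply_of_ne_of_ne hzq hzr, swap_apply_of_ne_of_ne hzp hzr,
      swap_apply_of_ne_of_ne hzp hzq]

private lemma center_triv {n : ℕ} (hn : 3 ≤ n) {x : Perm (Fin n)}
    (hx : ∀ y : Perm (Fin n), y * x = x * y) : x = 1 := by
  by_contra hx1
  obtain ⟨a, ha⟩ : ∃ a, x a ≠ a := by
    by_contra hall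
    push_neg at hall
    exact hx1 (Equiv.ext hall)
  have hab : x a ≠ a := ha
  obtain ⟨c, hca, hcb⟩ : ∃ c : Fin n, c ≠ a ∧ c ≠ x a := by
    by_contra hcon
    push_neg at hcon
    have hsub : (Finset.univ : Finset (Fin n)) ⊆ {a, x a} := by
      intro c _
      rcases eq_or_ne c a with rfl | hne
      · simp
      · simp [hcon c hne]
    have hle := Finset.card_le_card hsub
    have h2 : ({a, x a} : Finset (Fin n)).card ≤ 2 := by
      apply le_trans (Finset.card_insert_le _ _)
      simp
    rw [Finset.card_univ, Fintype.card_fin] at hle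
    omega
  have hcomm := hx (Equiv.swap (x a) c)
  have hval := congrArg (fun σ : Perm (Fin n) => σ a) hcomm
  simp only [Perm.mul_apply] at hval
  -- LHS : swap (x a) c (x a) = c ; RHS : x (swap (x a) c a) = x a
  rw [swap_apply_left, swap_apply_of_ne_of_ne (Ne.symm hab) (Ne.symm hca)] at hval
  exact hcb hval

private lemma exists_conj {n : ℕ} (hn : 3 ≤ n) (hn6 : n ≠ 6)
    (e : Perm (Fin n) ≃* Perm (Fin n)) :
    ∃ π : Perm (Fin n), ∀ x, e x = π * x * π⁻¹ := by
  classical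
  set z0 : Fin n := ⟨0, by omega⟩ with hz0
  set z1 : Fin n := ⟨1, by omega⟩ with hz1
  set z2 : Fin n := ⟨2, by omega⟩ with hz2
  have h01 : z0 ≠ z1 := by simp [hz0, hz1, Fin.ext_iff]
  have h02 : z0 ≠ z2 := by simp [hz0, hz2, Fin.ext_iff]
  have h12 : z1 ≠ z2 := by simp [hz1, hz2, Fin.ext_iff]
  set t : Fin n → Perm (Fin n) := fun i => Equiv.swap z0 i with ht
  set s : Fin n → Perm (Fin n) := fun i => e (t i) with hs
  have hts : ∀ i, i ≠ z0 → IsSwap (t i) := fun i hi => ⟨z0, i, Ne.symm hi, rfl⟩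
  have hss : ∀ i, i ≠ z0 → IsSwap (s i) := fun i hi => isSwap_map hn6 e (hts i hi)
  have hnc : ∀ i j, i ≠ z0 → j ≠ z0 → i ≠ j → ¬ Commute (s i) (s j) := by
    intro i j hi hj hij hcom
    have hcom' : t i * t j = t j * t i := by
      apply e.injective
      rw [map_mul, map_mul]
      exact hcom
    have hval := congrArg (fun σ : Perm (Fin n) => σ j) hcom'
    simp only [Perm.mul_apply, ht] at hval
    rw [swap_apply_right, swap_apply_left, swap_apply_of_ne_of_ne hj hij.symm,
      swap_apply_right] at hval
    -- hval : i = z0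
    exact hi hval
  obtain ⟨a1, b1, hab1, hsab1⟩ := hss z1 (Ne.symm h01)
  obtain ⟨a2, b2, hab2, hsab2⟩ := hss z2 (Ne.symm h02)
  have hnc12 : ¬ Commute (Equiv.swap a1 b1) (Equiv.swap a2 b2) := by
    rw [← hsab1, ← hsab2]
    exact hnc z1 z2 (Ne.symm h01) (Ne.symm h02) h12
  obtain ⟨p, q, r, hpq, hpr, hqr, hsw1, hsw2⟩ := swap_noncomm_shape hab1 hab2 hnc12
  have hs1 : s z1 = Equiv.swap p q := by rw [hsab1, hsw1]
  have hs2 : s z2 = Equiv.swap p r := by rw [hsab2, hsw2]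
  have he1 : ∀ j, e (t j) = s j := fun j => rfl
  -- every s i moves p
  have hmoves : ∀ i, i ≠ z0 → (s i) p ≠ p := by
    intro i hi hfix
    have hi1 : i ≠ z1 := by
      rintro rfl
      rw [hs1, swap_apply_left] at hfix
      exact hpq hfix.symm
    have hi2 : i ≠ z2 := by
      rintro rfl
      rw [hs2, swap_apply_left] at hfix
      exact hpr hfix.symm
    obtain ⟨u, v, huv, hsuv⟩ := hss i hi
    rw [hsuv] at hfix
    have hpu : p ≠ u := by
      rintro rfl
      rw [swap_apply_left] at hfix
      exact huv hfix.symm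
    have hpv : p ≠ v := by
      rintro rfl
      rw [swap_apply_right] at hfix
      exact huv hfix
    have hn1 := hnc i z1 hi (Ne.symm h01) hi1
    have hn2 := hnc i z2 hi (Ne.symm h02) hi2
    rw [hsuv, hs1] at hn1
    rw [hsuv, hs2] at hn2
    have hq' : u = q ∨ v = q := by
      by_contra hcon
      push_neg at hcon
      exact hn1 (commute_swap_of_disjoint hpu.symm hcon.1 hpv.symm hcon.2)
    have hr' : u = r ∨ v = r := by
      by_contra hcon
      push_neg at hcon
      exact hn2 (commute_swap_of_disjoint hpu.symm hcon.1 hpv.symm hcon.2)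
    have hsqr : s i = Equiv.swap q r := by
      rcases hq' with h | h <;> rcases hr' with h' | h'
      · exact absurd (h.symm.trans h') hqr
      · rw [hsuv, h, h']
      · rw [hsuv, h', h, Equiv.swap_comm]
      · exact absurd (h.symm.trans h') hqr
    have hex : e (t z1 * t z2 * t i) = Equiv.swap p r := by
      rw [map_mul, map_mul, he1, he1, he1, hs1, hs2, hsqr]
      exact triple_swap hpq hpr hqr
    have hx2 : (t z1 * t z2 * t i) * (t z1 * t z2 * t i) = 1 := by
      apply e.injective
      rw [map_mul, hex, map_one, swap_mul_self]
    have hvx : (t z1 * t z2 * t i) z0 = i := by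
      simp only [Perm.mul_apply, ht]
      rw [swap_apply_left, swap_apply_of_ne_of_ne hi hi2, swap_apply_of_ne_of_ne hi hi1]
    have hvi : (t z1 * t z2 * t i) i = z2 := by
      simp only [Perm.mul_apply, ht]
      rw [swap_apply_right, swap_apply_left, swap_apply_of_ne_of_ne (Ne.symm h02) (Ne.symm h12)]
    have hfinal : (t z1 * t z2 * t i) ((t z1 * t z2 * t i) z0) = z0 := by
      rw [← Perm.mul_apply, hx2, Perm.one_apply]
    rw [hvx, hvi] at hfinal
    exact h02 hfinal.symm
  -- the conjugating permutation
  set bfun : Fin n → Fin n := fun i => if i = z0 then p else s i p with hbfun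
  have hbinj : Function.Injective bfun := by
    intro i j hij
    by_cases hi : i = z0 <;> by_cases hj : j = z0
    · rw [hi, hj]
    · exfalso
      simp only [hbfun] at hij
      rw [if_pos hi, if_neg hj] at hij
      exact hmoves j hj hij.symm
    · exfalso
      simp only [hbfun] at hij
      rw [if_neg hi, if_pos hj] at hij
      exact hmoves i hi hij
    · simp only [hbfun] at hij
      rw [if_neg hi, if_neg hj] at hij
      have hsi : s i = Equiv.swap p (s i p) := isSwap_eq_swap_of_moves (hss i hi) (hmoves i hi)
      have hsj : s j = Equiv.swap p (s j p) := isSwap_eq_swap_of_moves (hss j hj) (hmoves j hj)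
      have hsij : s i = s j := by rw [hsi, hsj, hij]
      have htij : t i = t j := e.injective hsij
      have := congrArg (fun σ : Perm (Fin n) => σ z0) htij
      simpa [ht, swap_apply_left] using this
  have hbbij := Finite.injective_iff_bijective.mp hbinj
  set π := Equiv.ofBijective bfun hbbij with hπdef
  have hπ0 : π z0 = p := by simp [hπdef, hbfun]
  have hπi : ∀ i, i ≠ z0 → π i = s i p := by
    intro i hi
    simp [hπdef, hbfun, hi]
  have hkey : ∀ i, e (Equiv.swap z0 i) = π * Equiv.swap z0 i * π⁻¹ := by
    intro i
    by_cases hi : i = z0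
    · subst hi
      have h1 : Equiv.swap z0 z0 = (1 : Perm (Fin n)) := by
        rw [Equiv.swap_self]
        rfl
      rw [h1, map_one, mul_one, mul_inv_cancel]
    · have hconj : Equiv.swap (π z0) (π i) = π * Equiv.swap z0 i * π⁻¹ :=
        swap_apply_apply π z0 i
      rw [← hconj, hπ0, hπi i hi]
      exact isSwap_eq_swap_of_moves (hss i hi) (hmoves i hi)
  have hswap : ∀ u v : Fin n, u ≠ v → e (Equiv.swap u v) = π * Equiv.swap u v * π⁻¹ := by
    intro u v huv
    by_cases hu : u = z0
    · subst hu
      exact hkey v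
    by_cases hv : v = z0
    · subst hv
      rw [Equiv.swap_comm u z0]
      exact hkey u
    · have hdecomp : Equiv.swap z0 u * Equiv.swap z0 v * (Equiv.swap z0 u)⁻¹
          = Equiv.swap u v := by
        rw [← swap_apply_apply, swap_apply_left, swap_apply_of_ne_of_ne hv (Ne.symm huv)]
      rw [← hdecomp, map_mul, map_mul, map_inv, hkey u, hkey v]
      group
  refine ⟨π, fun x => ?_⟩
  have heqhom : e.toMonoidHom = (MulAut.conj π).toMonoidHom := by
    apply MonoidHom.eq_of_eqOn_dense (Equiv.Perm.closure_isSwap (α := Fin n))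
    rintro σ ⟨u, v, huv, rfl⟩
    show e (Equiv.swap u v) = (MulAut.conj π) (Equiv.swap u v)
    rw [MulAut.conj_apply]
    exact hswap u v huv
  have := DFunLike.congr_fun heqhom x
  simpa [MulAut.conj_apply] using this

/-- For `n ≥ 3`, `n ≠ 6`, and `A` a finite abelian group, any group `G` fitting into a short
exact sequence `1 → Sₙ → G → A → 1` is isomorphic to the direct product `Sₙ × A`. -/
theorem stmt_1 (n : ℕ) (hn : 3 ≤ n) (hn6 : n ≠ 6) {G A : Type*} [Group G] [CommGroup A]
    [Finite A] (f : Equiv.Perm (Fin n) →* G) (hf : Function.Injective f)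
    (g : G →* A) (hg : Function.Surjective g) (hexact : f.range = g.ker) :
    Nonempty (G ≃* Equiv.Perm (Fin n) × A) := by
  classical
  set P := Perm (Fin n)
  -- conjugation preserves the image of f
  have hmemker : ∀ x : P, f x ∈ g.ker := fun x => hexact ▸ ⟨x, rfl⟩
  have hnorm : ∀ (y : G) (x : P), ∃ x', f x' = y * f x * y⁻¹ := by
    intro y x
    have : y * f x * y⁻¹ ∈ f.range := by
      rw [hexact, MonoidHom.mem_ker]
      rw [map_mul, map_mul]
      have := MonoidHom.mem_ker.mp (hmemker x)
      rw [this, mul_one, map_inv, mul_inv_cancel]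
    exact this
  -- every element is f σ * z with z centralizing the image of f
  have hdecomp : ∀ y : G, ∃ (σ : P) (z : G),
      (∀ x : P, z * f x = f x * z) ∧ y = f σ * z := by
    intro y
    choose θ hθ using hnorm y
    choose θ' hθ' using hnorm y⁻¹
    have hθmul : ∀ x x', θ (x * x') = θ x * θ x' := by
      intro x x'
      apply hf
      rw [map_mul, hθ, hθ, hθ, map_mul]
      group
    have hlr : ∀ x, θ (θ' x) = x := by
      intro x
      apply hf
      rw [hθ, hθ']
      group
    have hrl : ∀ x, θ' (θ x) = x := by
      intro x
      apply hf
      rw [hθ', hθ]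
      group
    let E : P ≃* P :=
      { toFun := θ
        invFun := θ'
        left_inv := hrl
        right_inv := hlr
        map_mul' := hθmul }
    obtain ⟨π, hπ⟩ := exists_conj hn hn6 E
    refine ⟨π, (f π)⁻¹ * y, ?_, by group⟩
    intro x
    have h1 : y * f x * y⁻¹ = f (π * x * π⁻¹) := by
      rw [← hθ x]
      congr 1
      exact hπ x
    -- z * f x = f x * z
    have h2 : y * f x = f π * f x * f π⁻¹ * y := by
      rw [← map_mul, ← map_mul]
      calc y * f x = (y * f x * y⁻¹) * y := by group
        _ = f (π * x * π⁻¹) * y := by rw [h1]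
        _ = f (π * x * π⁻¹) * y := rfl
    rw [map_inv] at h2
    calc (f π)⁻¹ * y * f x = (f π)⁻¹ * (y * f x) := by group
      _ = (f π)⁻¹ * (f π * f x * (f π)⁻¹ * y) := by rw [h2]
      _ = f x * ((f π)⁻¹ * y) := by group
  -- trivial intersection
  have htriv : ∀ x : P, (∀ x' : P, f x * f x' = f x' * f x) → x = 1 := by
    intro x hx
    apply center_triv hn
    intro y
    apply hf
    rw [map_mul, map_mul]
    exact (hx y).symm
  -- the centralizer subgroup
  let C : Subgroup G := Subgroup.centralizer (f.range : Set G)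
  have hmemC : ∀ z : G, (∀ x : P, z * f x = f x * z) ↔ z ∈ C := by
    intro z
    rw [Subgroup.mem_centralizer_iff]
    constructor
    · rintro h w ⟨x, rfl⟩
      exact (h x).symm
    · intro h x
      exact (h (f x) ⟨x, rfl⟩).symm
  have hzc : ∀ (z : C) (x : P), (z : G) * f x = f x * z :=
    fun z x => ((hmemC z).mpr z.2) x
  -- the product homomorphism
  let Φ : P × C →* G := MonoidHom.mk' (fun q => f q.1 * q.2.1) (by
    rintro ⟨x, z⟩ ⟨x', z'⟩
    show f (x * x') * ((z * z' : C) : G) = f x * z * (f x' * z')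
    rw [map_mul, Subgroup.coe_mul]
    calc f x * f x' * ((z : G) * (z' : G)) = f x * (f x' * z) * z' := by group
      _ = f x * ((z : G) * f x') * z' := by rw [hzc z x']
      _ = f x * z * (f x' * z') := by group)
  have hΦ : ∀ (x : P) (z : C), Φ (x, z) = f x * z := fun x z => rfl
  have hΦinj : Function.Injective Φ := by
    rw [injective_iff_map_eq_one]
    rintro ⟨x, z⟩ h
    rw [hΦ] at h
    have hz1 : (z : G) = f x⁻¹ := by
      rw [map_inv]
      exact eq_inv_of_mul_eq_one_right h
    have hxc : ∀ x' : P, f x⁻¹ * f x' = f x' * f x⁻¹ := by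
      intro x'
      have h3 := hzc z x'
      rwa [hz1] at h3
    have hx1 : x⁻¹ = 1 := htriv x⁻¹ hxc
    have hx1' : x = 1 := by rwa [inv_eq_one] at hx1
    have hz1' : z = 1 := by
      apply Subtype.ext
      rw [OneMemClass.coe_one, hz1, hx1']
      simp
    rw [hx1', hz1']
    rfl
  have hΦsurj : Function.Surjective Φ := by
    intro y
    obtain ⟨σ, z, hzcent, hy⟩ := hdecomp y
    exact ⟨(σ, ⟨z, (hmemC z).mp hzcent⟩), hy.symm⟩
  let E1 : P × C ≃* G := MulEquiv.ofBijective Φ ⟨hΦinj, hΦsurj⟩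
  let gC : C →* A := g.comp C.subtype
  have hgCinj : Function.Injective gC := by
    rw [injective_iff_map_eq_one]
    rintro ⟨z, hzC⟩ h
    have hzker : z ∈ g.ker := MonoidHom.mem_ker.mpr h
    rw [← hexact] at hzker
    obtain ⟨x, hx⟩ := hzker
    have hxc : ∀ x' : P, f x * f x' = f x' * f x := by
      intro x'
      have : f x ∈ C := by rw [hx]; exact hzC
      exact ((hmemC (f x)).mpr this) x'
    have hx1 : x = 1 := htriv x hxc
    apply Subtype.ext
    show z = (1 : G)
    rw [← hx, hx1, map_one]
  have hgCsurj : Function.Surjective gC := by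
    intro a
    obtain ⟨y, rfl⟩ := hg a
    obtain ⟨σ, z, hzcent, hy⟩ := hdecomp y
    refine ⟨⟨z, (hmemC z).mp hzcent⟩, ?_⟩
    show g z = g y
    rw [hy, map_mul, MonoidHom.mem_ker.mp (hmemker σ), one_mul]
  let E2 : C ≃* A := MulEquiv.ofBijective gC ⟨hgCinj, hgCsurj⟩
  exact ⟨E1.symm.trans (MulEquiv.prodCongr (MulEquiv.refl P) E2)⟩
end

section
/- Let G be a finite group fitting into a short exact sequence 1 → A_4 → G → ℤ/nℤ → 0 for some positive integer n. Then G contains a normal abelian subgroup of index at most 6. -/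
open Equiv Subgroup
open scoped commutatorElement

private abbrev A4 := alternatingGroup (Fin 4)

private def w₁ : A4 := ⟨swap 0 1 * swap 2 3, by rw [Equiv.Perm.mem_alternatingGroup]; decide⟩
private def w₂ : A4 := ⟨swap 0 2 * swap 1 3, by rw [Equiv.Perm.mem_alternatingGroup]; decide⟩
private def w₃ : A4 := ⟨swap 0 3 * swap 1 2, by rw [Equiv.Perm.mem_alternatingGroup]; decide⟩

private def KlP (x : A4) : Prop := x = 1 ∨ x = w₁ ∨ x = w₂ ∨ x = w₃

private instance : DecidablePred KlP := fun x =>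
  inferInstanceAs (Decidable (x = 1 ∨ x = w₁ ∨ x = w₂ ∨ x = w₃))

/-- The Klein four-subgroup of `A₄`. -/
private def Kl : Subgroup A4 where
  carrier := {x | KlP x}
  one_mem' := by left; rfl
  mul_mem' := fun {a b} ha hb =>
    (by decide : ∀ a b : A4, KlP a → KlP b → KlP (a * b)) a b ha hb
  inv_mem' := fun {a} ha => (by decide : ∀ a : A4, KlP a → KlP a⁻¹) a ha

private instance : DecidablePred (· ∈ Kl) := fun x => inferInstanceAs (Decidable (KlP x))

set_option linter.unreachableTactic false in
set_option linter.unusedTactic false in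
/-- The derived subgroup of `A₄` is the Klein four-group. -/
private lemma hKl : commutator A4 = Kl := by
  apply le_antisymm
  · rw [commutator_def, Subgroup.commutator_le]
    intro g₁ _ g₂ _
    exact (by decide : ∀ a b : A4, KlP ⁅a, b⁆) g₁ g₂
  · intro x hx
    rw [_root_.commutator_def]
    obtain h | h | h | h := hx
    · rw [h]; exact one_mem _
    · rw [h, (by decide : w₁ = ⁅(⟨swap 0 1 * swap 0 2, by rw [Equiv.Perm.mem_alternatingGroup]; decide⟩ : A4), (⟨swap 1 2 * swap 2 3, by rw [Equiv.Perm.mem_alternatingGroup]; decide⟩ : A4)⁆)]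
      exact commutator_mem_commutator (mem_top _) (mem_top _)
    · rw [h, (by decide : w₂ = ⁅(⟨swap 0 1 * swap 0 2, by rw [Equiv.Perm.mem_alternatingGroup]; decide⟩ : A4), (⟨swap 0 1 * swap 1 3, by rw [Equiv.Perm.mem_alternatingGroup]; decide⟩ : A4)⁆)]
      exact commutator_mem_commutator (mem_top _) (mem_top _)
    · rw [h, (by decide : w₃ = ⁅(⟨swap 0 1 * swap 0 2, by rw [Equiv.Perm.mem_alternatingGroup]; decide⟩ : A4), (⟨swap 0 1 * swap 2 3, by rw [Equiv.Perm.mem_alternatingGroup]; decide⟩ : A4)⁆)]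
      exact commutator_mem_commutator (mem_top _) (mem_top _)

/-- The Klein four-subgroup is self-centralizing in `A₄`. -/
private lemma centralizer_Kl' : ∀ a : A4,
    (∀ w ∈ commutator A4, a * w = w * a) → a ∈ commutator A4 := by
  rw [hKl]
  decide

private lemma card_comm_A4 : Nat.card (commutator A4) = 4 := by
  rw [hKl, Nat.card_eq_fintype_card]
  decide

/-- A group of order 4 has at most 6 automorphisms. -/
private lemma mulAut_card_le {W : Type*} [Group W] [Finite W] (hW : Nat.card W = 4) :
    Nat.card (MulAut W) ≤ 6 := by
  classical
  haveI : Fintype W := Fintype.ofFinite W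
  set T := {x : W // x ≠ 1}
  have hT : Fintype.card T = 3 := by
    have : Fintype.card W = 4 := by rw [← Nat.card_eq_fintype_card, hW]
    simp [T, Fintype.card_subtype_compl, this, Fintype.card_subtype_eq]
  let f : MulAut W → (T ↪ T) := fun σ =>
    ⟨fun x => ⟨σ x.1, fun h => x.2 (by
        have := σ.injective (a₁ := x.1) (a₂ := 1) (by simpa using h)
        simpa using this)⟩,
     fun x y hxy => Subtype.ext (σ.injective (by simpa using congrArg Subtype.val hxy))⟩
  have hf : Function.Injective f := by
    intro σ τ h
    ext x
    by_cases hx : x = 1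
    · simp [hx]
    · have := congrArg (fun g => (g ⟨x, hx⟩ : T).1) h
      exact this
  have := Nat.card_le_card_of_injective f hf
  have hemb : Nat.card (T ↪ T) = 6 := by
    rw [Nat.card_eq_fintype_card, Fintype.card_embedding_eq, hT]
    rfl
  omega

/-- If a finite group `G` fits into `1 → A₄ → G → ℤ/nℤ → 0` (cyclic quotient), then `G`
contains a normal abelian subgroup of index at most 6. -/
theorem stmt_10 {G : Type*} [Group G] [Finite G] (F : Subgroup G) (hFn : F.Normal)
    (hF : Nonempty (F ≃* alternatingGroup (Fin 4))) (hB : IsCyclic (G ⧸ F)) :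
    ∃ N : Subgroup G, N.Normal ∧ IsMulCommutative N ∧ N.index ≤ 6 := by
  haveI := hFn
  obtain ⟨e⟩ := hF
  set V : Subgroup G := ⁅F, F⁆ with hV
  haveI hVn : V.Normal := Subgroup.commutator_normal F F
  have h1 : Subgroup.map F.subtype (commutator F) = V := by
    rw [_root_.commutator_def, Subgroup.map_commutator, ← MonoidHom.range_eq_map, Subgroup.range_subtype]
  have h2 : Subgroup.map e.toMonoidHom (commutator F) = commutator (alternatingGroup (Fin 4)) := by
    rw [_root_.commutator_def, _root_.commutator_def, Subgroup.map_commutator,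
      Subgroup.map_top_of_surjective _ e.surjective]
  set C : Subgroup G := Subgroup.centralizer (V : Set G) with hC
  have hCn : C.Normal := by
    constructor
    intro n hn g
    rw [Subgroup.mem_centralizer_iff] at *
    intro v hv
    have hv' : g⁻¹ * v * g ∈ V := by simpa using hVn.conj_mem v hv g⁻¹
    have key := hn _ hv'
    have e1 : v * (g * n * g⁻¹) = g * ((g⁻¹ * v * g) * n) * g⁻¹ := by group
    rw [e1, key]; group
  -- key fact : F ⊓ C ≤ V
  have hkey : ∀ x : G, x ∈ F → x ∈ C → x ∈ V := by
    intro x hxF hxC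
    set y : F := ⟨x, hxF⟩ with hy
    have hcy : ∀ w ∈ commutator (alternatingGroup (Fin 4)), (e y) * w = w * (e y) := by
      intro w hw
      rw [← h2] at hw
      obtain ⟨v, hv, rfl⟩ := hw
      show e y * e v = e v * e y
      rw [← map_mul, ← map_mul]
      congr 1
      have hvV : (↑v : G) ∈ V := by rw [← h1]; exact Subgroup.mem_map_of_mem _ hv
      have := (Subgroup.mem_centralizer_iff.mp hxC) _ hvV
      exact Subtype.ext this.symm
    have hey : e y ∈ commutator (alternatingGroup (Fin 4)) := centralizer_Kl' _ hcy
    have hymem : y ∈ commutator F := by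
      rw [← h2] at hey
      obtain ⟨z, hz, hez⟩ := hey
      rwa [← e.injective hez]
    rw [← h1]
    exact Subgroup.mem_map_of_mem _ hymem
  refine ⟨C, hCn, ?_, ?_⟩
  · -- commutative : `C/V` is cyclic with `V` central in `C`
    have hker : ((QuotientGroup.mk' F).comp C.subtype).ker ≤ Subgroup.center C := by
      intro c hc
      rw [MonoidHom.mem_ker, MonoidHom.comp_apply, QuotientGroup.mk'_apply,
        QuotientGroup.eq_one_iff] at hc
      have hcV : (↑c : G) ∈ V := hkey _ hc c.2
      rw [Subgroup.mem_center_iff]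
      intro b
      exact Subtype.ext ((Subgroup.mem_centralizer_iff.mp b.2) _ hcV).symm
    haveI := hB
    exact ⟨⟨fun a b => commutative_of_cyclic_center_quotient _ hker a b⟩⟩
  · -- index : `G/C` embeds into `Aut(V)`, a group of order 6
    have hkerφ : (MulAut.conjNormal : G →* MulAut V).ker = C := by
      ext g
      rw [MonoidHom.mem_ker]
      constructor
      · intro hg
        rw [hC, Subgroup.mem_centralizer_iff]
        intro v hv
        have h := MulAut.conjNormal_apply g (⟨v, hv⟩ : V)
        rw [hg] at h
        simp only [MulAut.one_apply] at h
        calc v * g = (g * v * g⁻¹) * g := by conv_lhs => rw [h]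
        _ = g * v := by group
      · intro hg
        refine MulEquiv.ext fun v => ?_
        have h := (Subgroup.mem_centralizer_iff.mp hg) v.1 v.2
        refine Subtype.ext ?_
        rw [MulAut.conjNormal_apply]
        show g * ↑v * g⁻¹ = ((1 : MulAut V) v : G)
        rw [MulAut.one_apply, ← h]
        group
    have hcardV : Nat.card V = 4 := by
      have e1 : Nat.card V = Nat.card (commutator F) := by
        rw [← h1]
        exact (Nat.card_congr (Subgroup.equivMapOfInjective _ _ F.subtype_injective).toEquiv).symm
      have e2 : Nat.card (commutator F) = Nat.card (commutator (alternatingGroup (Fin 4))) := by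
        rw [← h2]; exact Nat.card_congr (Subgroup.equivMapOfInjective _ _ e.injective).toEquiv
      rw [e1, e2, card_comm_A4]
    haveI : Finite (MulAut V) := Finite.of_injective (MulEquiv.toEquiv)
      (fun _ _ h => MulEquiv.toEquiv_injective h)
    calc C.index = (MulAut.conjNormal : G →* MulAut V).ker.index := by rw [hkerφ]
      _ = Nat.card (MulAut.conjNormal : G →* MulAut V).range := Subgroup.index_ker _
      _ ≤ Nat.card (MulAut V) := Nat.card_le_card_of_injective _ Subtype.val_injective
      _ ≤ 6 := mulAut_card_le hcardV
end

section
/- Let G be a finite group fitting into a short exact sequence 1 → S_4 → G → ℤ/nℤ → 0. Then G is isomorphic to S_4 × ℤ/nℤ and contains a normal abelian subgroup of index 6. -/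
set_option maxRecDepth 40000
open Equiv Equiv.Perm Subgroup

private lemma s4_pairs : ∀ a b : Perm (Fin 4), (a*a = 1 ∧ b^4 = 1 ∧ b*b ≠ 1 ∧ (a*b)^3 = 1) →
    ∃ k : Perm (Fin 4), a = k * Equiv.swap 0 1 * k⁻¹ ∧ b = k * finRotate 4 * k⁻¹ := by decide

private lemma aut_inner (φ : Perm (Fin 4) ≃* Perm (Fin 4)) :
    ∃ k : Perm (Fin 4), ∀ x, φ x = k * x * k⁻¹ := by
  set s : Perm (Fin 4) := Equiv.swap 0 1 with hs
  set c : Perm (Fin 4) := finRotate 4 with hc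
  have h1 : φ s * φ s = 1 := by
    rw [← map_mul, (by decide : s * s = 1), map_one]
  have h2 : (φ c)^4 = 1 := by rw [← map_pow, (by decide : c^4 = 1), map_one]
  have h3 : φ c * φ c ≠ 1 := by
    rw [← map_mul]
    intro h
    exact (by decide : ¬ (c * c = 1)) (φ.injective (by rw [h, map_one]))
  have h4 : (φ s * φ c)^3 = 1 := by
    rw [← map_mul, ← map_pow, (by decide : (s*c)^3 = 1), map_one]
  obtain ⟨k, hk1, hk2⟩ := s4_pairs (φ s) (φ c) ⟨h1, h2, h3, h4⟩
  refine ⟨k, ?_⟩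
  have hgen : Subgroup.closure ({c, s} : Set (Perm (Fin 4))) = ⊤ := by
    have := closure_cycle_adjacent_swap (isCycle_finRotate (n := 2)) support_finRotate 0
    have h0 : finRotate 4 0 = 1 := by decide
    rwa [h0] at this
  have := MonoidHom.eq_of_eqOn_dense hgen (f := φ.toMonoidHom)
    (g := (MulAut.conj k).toMonoidHom) ?_
  · intro x
    have := congrFun (congrArg (·.toFun) this) x
    simpa [MulAut.conj] using this
  · intro x hx
    rcases hx with h | h
    · simpa [h, MulAut.conj] using hk2
    · simp only [Set.mem_singleton_iff] at h
      simpa [h, MulAut.conj] using hk1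

private def kleinP (x : Perm (Fin 4)) : Prop := x = 1 ∨ (x * x = 1 ∧ ∀ i, x i ≠ i)

private instance : DecidablePred kleinP := fun x => by unfold kleinP; infer_instance

private def klein : Subgroup (Perm (Fin 4)) where
  carrier := {x | kleinP x}
  one_mem' := Or.inl rfl
  mul_mem' {a b} ha hb := by revert ha hb; revert a b; decide
  inv_mem' {a} ha := by revert ha; revert a; decide

private instance : DecidablePred (· ∈ klein) :=
  fun x => show Decidable (kleinP x) from inferInstance

private lemma klein_normal : klein.Normal := by
  constructor
  intro x hx g
  revert hx; revert x g; decide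

private lemma klein_comm : IsMulCommutative klein := by
  constructor; constructor
  rintro ⟨a, ha⟩ ⟨b, hb⟩
  have : a * b = b * a := by revert ha hb; revert a b; decide
  exact Subtype.ext this

private lemma klein_card : Nat.card klein = 4 := by
  rw [Nat.card_eq_fintype_card]
  rfl

private lemma klein_index : klein.index = 6 := by
  have h := klein.card_mul_index
  rw [klein_card] at h
  have : Nat.card (Perm (Fin 4)) = 24 := by
    rw [Nat.card_eq_fintype_card]; rfl
  omega

private lemma perm4_center (y : Perm (Fin 4)) (h : ∀ z : Perm (Fin 4), z * y = y * z) :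
    y = 1 := by revert h; revert y; decide

/-- If a finite group `G` fits into `1 → S₄ → G → ℤ/nℤ → 0`, then `G` is isomorphic to
`S₄ × ℤ/nℤ` and contains a normal abelian subgroup of index 6. -/
theorem stmt_12 (n : ℕ) (hn : 0 < n) {G : Type*} [Group G]
    (f : Equiv.Perm (Fin 4) →* G) (hf : Function.Injective f)
    (g : G →* Multiplicative (ZMod n)) (hg : Function.Surjective g)
    (hexact : f.range = g.ker) :
    Nonempty (G ≃* Equiv.Perm (Fin 4) × Multiplicative (ZMod n)) ∧
      ∃ N : Subgroup G, N.Normal ∧ IsMulCommutative N ∧ N.index = 6 := by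
  have hKnorm : f.range.Normal := hexact ▸ g.normal_ker
  set K := f.range with hK
  set C := Subgroup.centralizer (K : Set G) with hC
  have hCnorm : C.Normal := by
    constructor
    intro c hc x
    rw [Subgroup.mem_centralizer_iff] at hc ⊢
    intro h hh
    have hh' : x⁻¹ * h * x ∈ K := by
      have := hKnorm.conj_mem h hh x⁻¹
      simpa using this
    have := hc _ hh'
    have : x * (x⁻¹ * h * x * c) * x⁻¹ = x * (c * (x⁻¹ * h * x)) * x⁻¹ := by rw [this]
    group at this
    group
    convert this using 1 <;> group
  have hdisj : Disjoint K C := by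
    rw [Subgroup.disjoint_def]
    intro x hxK hxC
    obtain ⟨y, rfl⟩ := hxK
    have : y = 1 := by
      apply perm4_center
      intro z
      apply hf
      rw [map_mul, map_mul]
      exact (hxC (f z) ⟨z, rfl⟩)
    rw [this, map_one]
  set e1 : Perm (Fin 4) ≃* K := MonoidHom.ofInjective hf with he1def
  have he1 : ∀ y : Perm (Fin 4), ((e1 y : K) : G) = f y := fun y => rfl
  have hsup : K ⊔ C = ⊤ := by
    rw [eq_top_iff]
    intro g0 _
    obtain ⟨k, hk⟩ := aut_inner ((e1.trans (MulAut.conjNormal g0 : K ≃* K)).trans e1.symm)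
    have key : ∀ x : Perm (Fin 4), g0 * f x * g0⁻¹ = f k * f x * (f k)⁻¹ := by
      intro x
      have h1 := hk x
      have h2 : ((MulAut.conjNormal g0 : K ≃* K) (e1 x) : G) = g0 * f x * g0⁻¹ := by
        rw [MulAut.conjNormal_apply, he1 x]
      simp only [MulEquiv.trans_apply] at h1
      have h3 : (MulAut.conjNormal g0 : K ≃* K) (e1 x) = e1 (k * x * k⁻¹) := by
        rw [← h1, MulEquiv.apply_symm_apply]
      rw [h3] at h2
      rw [← h2, he1]
      simp [map_mul]
    have hw : (f k)⁻¹ * g0 ∈ C := by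
      rw [Subgroup.mem_centralizer_iff]
      rintro h ⟨x, rfl⟩
      have := key x
      have : (f k)⁻¹ * (g0 * f x * g0⁻¹) * f k = f x := by rw [this]; group
      calc f x * ((f k)⁻¹ * g0) = ((f k)⁻¹ * (g0 * f x * g0⁻¹) * f k) * ((f k)⁻¹ * g0) := by
            rw [this]
        _ = (f k)⁻¹ * g0 * f x := by group
    have : g0 = f k * ((f k)⁻¹ * g0) := by group
    rw [this]
    exact mul_mem (le_sup_left (a := K) (b := C) ⟨k, rfl⟩) (le_sup_right (a := K) (b := C) hw)
  have hcomm : ∀ (a : K) (b : C), Commute ((K.subtype) a) ((C.subtype) b) :=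
    fun a b => Subgroup.commute_of_normal_of_disjoint K C hKnorm hCnorm hdisj a b a.2 b.2
  set θ : K × C →* G := K.subtype.noncommCoprod C.subtype hcomm with hθ
  have hθapp : ∀ p : K × C, θ p = (p.1 : G) * (p.2 : G) := fun p => rfl
  have hθinj : Function.Injective θ := by
    rw [injective_iff_map_eq_one]
    rintro ⟨a, b⟩ hab
    rw [hθapp] at hab
    have ha : (a : G) = (b : G)⁻¹ := by
      rw [eq_inv_iff_mul_eq_one]; exact hab
    have haK : (a : G) ∈ K ⊓ C := ⟨a.2, by rw [ha]; exact C.inv_mem b.2⟩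
    rw [hdisj.eq_bot] at haK
    have ha1 : (a : G) = 1 := haK
    have hb1 : (b : G) = 1 := by
      have := hab; rw [ha1, one_mul] at this; exact this
    exact Prod.ext (Subtype.ext ha1) (Subtype.ext hb1)
  have hθsurj : Function.Surjective θ := by
    intro x
    have hx : x ∈ (↑(K ⊔ C) : Set G) := by rw [hsup]; trivial
    rw [Subgroup.normal_mul] at hx
    obtain ⟨a, ha, b, hb, rfl⟩ := hx
    exact ⟨(⟨a, ha⟩, ⟨b, hb⟩), rfl⟩
  set eθ : K × C ≃* G := MulEquiv.ofBijective θ ⟨hθinj, hθsurj⟩ with heθ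
  -- C ≃* Multiplicative (ZMod n)
  set g' : C →* Multiplicative (ZMod n) := g.comp C.subtype with hg'
  have hg'inj : Function.Injective g' := by
    rw [injective_iff_map_eq_one]
    rintro ⟨b, hb⟩ h1
    have : b ∈ g.ker := h1
    rw [← hexact] at this
    have : b ∈ K ⊓ C := ⟨this, hb⟩
    rw [hdisj.eq_bot] at this
    exact Subtype.ext this
  have hg'surj : Function.Surjective g' := by
    intro m
    obtain ⟨x, rfl⟩ := hg m
    obtain ⟨⟨a, b⟩, rfl⟩ := hθsurj x
    refine ⟨b, ?_⟩
    have haker : (a : G) ∈ g.ker := hexact ▸ a.2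
    rw [hθapp, map_mul, haker, one_mul]
    rfl
  set e2 : C ≃* Multiplicative (ZMod n) := MulEquiv.ofBijective g' ⟨hg'inj, hg'surj⟩ with he2
  set e : G ≃* Perm (Fin 4) × Multiplicative (ZMod n) :=
    eθ.symm.trans (MulEquiv.prodCongr e1.symm e2) with he
  refine ⟨⟨e⟩, ?_⟩
  refine ⟨(klein.prod ⊤).comap e.toMonoidHom, ?_, ?_, ?_⟩
  · haveI := klein_normal
    haveI : (klein.prod (⊤ : Subgroup (Multiplicative (ZMod n)))).Normal :=
      Subgroup.prod_normal _ _
    exact Subgroup.Normal.comap this e.toMonoidHom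
  · constructor; constructor
    rintro ⟨x, hx⟩ ⟨y, hy⟩
    have hx' : (e x).1 ∈ klein := hx.1
    have hy' : (e y).1 ∈ klein := hy.1
    have hcomm1 : (e x).1 * (e y).1 = (e y).1 * (e x).1 := by
      have := klein_comm.is_comm.comm ⟨(e x).1, hx'⟩ ⟨(e y).1, hy'⟩
      exact Subtype.ext_iff.mp this
    have : x * y = y * x := by
      apply e.injective
      rw [map_mul, map_mul]
      exact Prod.ext hcomm1 (mul_comm _ _)
    exact Subtype.ext this
  · rw [Subgroup.index_comap_of_surjective _ e.surjective, Subgroup.index_prod,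
      Subgroup.index_top, klein_index, mul_one]
end

section
/- Let G be a finite group fitting into a short exact sequence 1 → S_4 → G → D_{2n} → 1 where D_{2n} is the dihedral group of order 2n (n ≥ 2). Then G contains a normal abelian subgroup of index at most 12. -/
private def KP (x : Equiv.Perm (Fin 4)) : Prop := x ^ 2 = 1 ∧ ∃ y, y ^ 2 = x

private instance : DecidablePred KP :=
  fun x => decidable_of_iff (x ^ 2 = 1 ∧ ∃ y, y ^ 2 = x) Iff.rfl

set_option maxRecDepth 4000 in
private lemma KP_one : KP 1 := by decide
set_option maxRecDepth 4000 in
private lemma KP_mul : ∀ a b, KP a → KP b → KP (a * b) := by decide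
set_option maxRecDepth 4000 in
private lemma KP_inv : ∀ a, KP a → KP a⁻¹ := by decide
set_option maxRecDepth 4000 in
private lemma KP_centralizer : ∀ x, (∀ k, KP k → k * x = x * k) → KP x := by decide
set_option maxRecDepth 4000 in
private lemma KP_card : Fintype.card {x : Equiv.Perm (Fin 4) // KP x} = 4 := by decide

private def K4 : Subgroup (Equiv.Perm (Fin 4)) where
  carrier := {x | KP x}
  one_mem' := KP_one
  mul_mem' := fun {a b} ha hb => KP_mul a b ha hb
  inv_mem' := fun {a} ha => KP_inv a ha

private lemma mem_K4_iff {x : Equiv.Perm (Fin 4)} : x ∈ K4 ↔ KP x := Iff.rfl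

private lemma K4_card : Nat.card ↥K4 = 4 := by
  have : Nat.card {x : Equiv.Perm (Fin 4) // KP x} = 4 := by
    rw [Nat.card_eq_fintype_card, KP_card]
  exact this

/-- If a finite group `G` fits into `1 → S₄ → G → D₂ₙ → 1` with `D₂ₙ` dihedral of order `2n`,
`n ≥ 2`, then `G` contains a normal abelian subgroup of index at most 12. -/
theorem stmt_13 {G : Type*} [Group G] [Finite G] (F : Subgroup G) (hFn : F.Normal)
    (hF : Nonempty (F ≃* Equiv.Perm (Fin 4)))
    (n : ℕ) (hn : 2 ≤ n) (hB : Nonempty ((G ⧸ F) ≃* DihedralGroup n)) :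
    ∃ N : Subgroup G, N.Normal ∧ IsMulCommutative N ∧ N.index ≤ 12 := by
  classical
  obtain ⟨e⟩ := hF
  obtain ⟨d⟩ := hB
  haveI : NeZero n := ⟨by omega⟩
  -- the embedding of S₄ into G with range F
  set φ : Equiv.Perm (Fin 4) →* G := F.subtype.comp e.symm.toMonoidHom with hφdef
  have hφinj : Function.Injective φ :=
    F.subtype_injective.comp e.symm.injective
  have hφmem : ∀ x, φ x ∈ F := fun x => (e.symm x).2
  have hφrange : φ.range = F := by
    ext g
    constructor
    · rintro ⟨x, rfl⟩; exact hφmem x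
    · intro hg; exact ⟨e ⟨g, hg⟩, by simp [φ]⟩
  -- the Klein four subgroup V of G
  set V : Subgroup G := K4.map φ with hVdef
  have hVF : V ≤ F := by rintro _ ⟨k, hk, rfl⟩; exact hφmem k
  have conj_sq : ∀ (g a : G), (g * a * g⁻¹) ^ 2 = g * a ^ 2 * g⁻¹ := by
    intro g a
    rw [pow_two, pow_two]
    simp [mul_assoc]
  have hVn : V.Normal := by
    constructor
    rintro _ ⟨k, hk, rfl⟩ g
    have h1 : g * φ k * g⁻¹ ∈ φ.range := by
      rw [hφrange]; exact hFn.conj_mem _ (hφmem k) g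
    obtain ⟨k', hk'⟩ := h1
    obtain ⟨hk2, w, hw⟩ := (mem_K4_iff.mp hk)
    refine ⟨k', mem_K4_iff.mpr ⟨?_, ?_⟩, hk'⟩
    · apply hφinj
      rw [map_pow, hk', map_one, conj_sq, ← map_pow, hk2, map_one, mul_one,
        mul_inv_cancel]
    · have h2 : g * φ w * g⁻¹ ∈ φ.range := by
        rw [hφrange]; exact hFn.conj_mem _ (hφmem w) g
      obtain ⟨y, hy⟩ := h2
      refine ⟨y, hφinj ?_⟩
      rw [map_pow, hy, hk', conj_sq, ← map_pow, hw]
  haveI := hVn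
  have hVcard : Nat.card ↥V = 4 := by
    rw [← K4_card]
    exact (Nat.card_congr (K4.equivMapOfInjective φ hφinj).toEquiv).symm
  -- the centralizer C of V
  set C : Subgroup G := Subgroup.centralizer (V : Set G) with hCdef
  have hCmem : ∀ {g : G}, g ∈ C ↔ ∀ h ∈ V, h * g = g * h := fun {g} =>
    Subgroup.mem_centralizer_iff
  have hCn : C.Normal := by
    constructor
    intro c hc g
    rw [hCmem] at hc ⊢
    intro h hh
    have h' : g⁻¹ * h * g ∈ V := by
      have := hVn.conj_mem h hh g⁻¹
      simpa using this
    have h2 := hc _ h'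
    have h3 := congrArg (fun x => g * x * g⁻¹) h2
    simpa [mul_assoc] using h3
  -- index of C is at most 6 via the conjugation action on V
  haveI : Finite (MulAut ↥V) :=
    Finite.of_injective (fun e => (e : ↥V → ↥V))
      (fun a b h => MulEquiv.ext (fun x => congrFun h x))
  have hker : (MulAut.conjNormal : G →* MulAut ↥V).ker = C := by
    ext g
    rw [MonoidHom.mem_ker, hCmem]
    constructor
    · intro hg h hh
      have h1 := congrArg (fun z : MulAut ↥V => ((z ⟨h, hh⟩ : ↥V) : G)) hg
      simp only [MulAut.conjNormal_apply, MulAut.one_apply] at h1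
      calc h * g = (g * h * g⁻¹) * g := by rw [h1]
        _ = g * h := by simp [mul_assoc]
    · intro hg
      ext h
      simp only [MulAut.conjNormal_apply, MulAut.one_apply]
      rw [mul_inv_eq_iff_eq_mul]
      exact (hg (h : G) h.2).symm
  -- |MulAut V| ≤ 6
  haveI : Fintype ↥V := Fintype.ofFinite ↥V
  have hV1card : Fintype.card {x : ↥V // ¬ x = 1} = 3 := by
    rw [Fintype.card_subtype_compl, Fintype.card_subtype_eq (1 : ↥V),
      ← Nat.card_eq_fintype_card, hVcard]
  have hMulAutcard : Nat.card (MulAut ↥V) ≤ 6 := by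
    have key : ∀ (a : MulAut ↥V) (x : ↥V), ¬ x = 1 ↔ ¬ a.toEquiv x = 1 := by
      intro a x
      rw [not_iff_not]
      exact ⟨fun hx => by rw [hx]; exact map_one a,
        fun hx => a.injective (by rw [map_one]; exact hx)⟩
    have hinj : Function.Injective
        (fun (a : MulAut ↥V) => Equiv.Perm.subtypePerm (p := fun x => ¬ x = 1) a.toEquiv (fun x => (key a x).symm)) := by
      intro a b hab
      apply MulEquiv.ext
      intro x
      by_cases hx : x = 1
      · rw [hx, map_one, map_one]
      · have h5 := congrArg (fun p : Equiv.Perm {x : ↥V // ¬ x = 1} =>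
          ((p ⟨x, hx⟩ : {x : ↥V // ¬ x = 1}) : ↥V)) hab
        simpa [Equiv.Perm.subtypePerm_apply] using h5
    calc Nat.card (MulAut ↥V) ≤ Nat.card (Equiv.Perm {x : ↥V // ¬ x = 1}) :=
          Nat.card_le_card_of_injective _ hinj
      _ = 6 := by
          rw [Nat.card_eq_fintype_card, Fintype.card_perm, hV1card]
          rfl
  have hCindex : C.index ≤ 6 := by
    rw [← hker, Subgroup.index_ker]
    calc Nat.card (MulAut.conjNormal : G →* MulAut ↥V).range
          ≤ Nat.card (MulAut ↥V) :=
          Nat.card_le_card_of_injective _ Subtype.val_injective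
      _ ≤ 6 := hMulAutcard
  -- the projection to the dihedral group
  set ψ : G →* DihedralGroup n := d.toMonoidHom.comp (QuotientGroup.mk' F) with hψdef
  have hψsurj : Function.Surjective ψ :=
    d.surjective.comp (QuotientGroup.mk'_surjective F)
  have hψker : ψ.ker = F := by
    ext x
    rw [MonoidHom.mem_ker, hψdef]
    simp only [MonoidHom.coe_comp, Function.comp_apply, MulEquiv.coe_toMonoidHom]
    rw [EmbeddingLike.map_eq_one_iff]
    exact QuotientGroup.eq_one_iff x
  -- the rotation subgroup R of the dihedral group
  set f0 : Multiplicative (ZMod n) →* DihedralGroup n :=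
    { toFun := fun i => DihedralGroup.r i.toAdd
      map_one' := DihedralGroup.one_def.symm
      map_mul' := fun i j => by rw [DihedralGroup.r_mul_r]; rfl } with hf0def
  have hf0 : ∀ i : Multiplicative (ZMod n), f0 i = DihedralGroup.r i.toAdd := fun _ => rfl
  set R : Subgroup (DihedralGroup n) := f0.range with hRdef
  haveI : IsCyclic ↥R := isCyclic_of_surjective f0.rangeRestrict f0.rangeRestrict_surjective
  have hf0inj : Function.Injective f0 := by
    intro a b hab
    rw [hf0, hf0, DihedralGroup.r.injEq] at hab
    exact Multiplicative.toAdd.injective hab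
  have hRcard : Nat.card ↥R = n := by
    have h1 : Nat.card (Multiplicative (ZMod n)) = Nat.card ↥R :=
      Nat.card_congr (MonoidHom.ofInjective hf0inj).toEquiv
    have h2 : Nat.card (Multiplicative (ZMod n)) = n := Nat.card_zmod n
    omega
  have hRindex : R.index = 2 := by
    have h1 := R.card_mul_index
    rw [hRcard, DihedralGroup.nat_card] at h1
    have hn0 : 0 < n := by omega
    exact Nat.eq_of_mul_eq_mul_left hn0 (by omega)
  have hRn : R.Normal := by
    constructor
    rintro _ ⟨i, rfl⟩ g
    rcases g with j | j
    · refine ⟨i, ?_⟩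
      rw [eq_comm, mul_inv_eq_iff_eq_mul, hf0, DihedralGroup.r_mul_r,
        DihedralGroup.r_mul_r, add_comm]
    · refine ⟨i⁻¹, ?_⟩
      rw [eq_comm, mul_inv_eq_iff_eq_mul, hf0, hf0, DihedralGroup.sr_mul_r,
        DihedralGroup.r_mul_sr]
      congr 1
      simp [sub_eq_add_neg]
  set P : Subgroup G := R.comap ψ with hPdef
  haveI hPn : P.Normal := hRn.comap ψ
  have hPindex : P.index = 2 := by
    have : P.index = R.index := R.index_comap_of_surjective hψsurj
    rw [this, hRindex]
  -- the normal abelian subgroup N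
  refine ⟨C ⊓ P, ?_, ?_, ?_⟩
  · constructor
    intro x hx g
    rw [Subgroup.mem_inf] at hx ⊢
    exact ⟨hCn.conj_mem x hx.1 g, hPn.conj_mem x hx.2 g⟩
  · -- commutativity
    have hCFV : C ⊓ F ≤ V := by
      intro g hg
      rw [Subgroup.mem_inf] at hg
      obtain ⟨hgC, hgF⟩ := hg
      have hgr : g ∈ φ.range := by rw [hφrange]; exact hgF
      obtain ⟨x, rfl⟩ := hgr
      refine ⟨x, mem_K4_iff.mpr ?_, rfl⟩
      apply KP_centralizer
      intro k hk
      apply hφinj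
      rw [map_mul, map_mul]
      exact (hCmem.mp hgC) (φ k) ⟨k, hk, rfl⟩
    set f : ↥(C ⊓ P) →* ↥R :=
      (ψ.comp (C ⊓ P).subtype).codRestrict R
        (fun x => (Subgroup.mem_inf.mp x.2).2) with hfdef
    have hcomm : ∀ a b : ↥(C ⊓ P), a * b = b * a := by
      apply commutative_of_cyclic_center_quotient f
      intro a ha
      have haψ : ψ (a : G) = 1 := by
        have h6 : (f a : DihedralGroup n) = ((1 : ↥R) : DihedralGroup n) := by
          rw [ha]
        exact h6
      have haF : (a : G) ∈ F := by rw [← hψker]; exact haψ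
      have haV : (a : G) ∈ V :=
        hCFV (Subgroup.mem_inf.mpr ⟨(Subgroup.mem_inf.mp a.2).1, haF⟩)
      rw [Subgroup.mem_center_iff]
      intro b
      apply Subtype.ext
      simp only [Subgroup.coe_mul]
      have hbC : (b : G) ∈ C := (Subgroup.mem_inf.mp b.2).1
      exact ((hCmem.mp hbC) (a : G) haV).symm
    exact ⟨⟨hcomm⟩⟩
  · calc (C ⊓ P).index ≤ C.index * P.index := Subgroup.index_inf_le
      _ ≤ 6 * 2 := by
          rw [hPindex]
          exact Nat.mul_le_mul_right 2 hCindex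
      _ = 12 := rfl
end

section
/- Let G be a finite group with a normal subgroup F and quotient B = G/F, where F is either cyclic or dihedral and B is either cyclic or dihedral. Suppose further that for every g ∈ G and every h ∈ F generating a characteristic cyclic subgroup ⟨h⟩ of F, conjugation satisfies g h g^{-1} ∈ {h, h^{-1}}. Then G contains a normal abelian subgroup of index at most 32. -/
open DihedralGroup in
private lemma aux_index_le_two {G : Type*} [Group G] (K : Subgroup G)
    (h : ∀ a b : G, a ∉ K → b ∉ K → a * b ∈ K) : K.index ≤ 2 := by
  by_cases htop : K = ⊤
  · simp [htop, Subgroup.index_top]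
  · obtain ⟨a, ha⟩ : ∃ a, a ∉ K := by
      by_contra hc; push_neg at hc
      exact htop ((Subgroup.eq_top_iff' _).2 hc)
    have : K.index = 2 := by
      rw [Subgroup.index_eq_two_iff]
      refine ⟨a, fun b => ?_⟩
      by_cases hb : b ∈ K
      · refine Or.inr ⟨hb, fun hba => ha ?_⟩
        have h2 := K.mul_mem (K.inv_mem hb) hba
        simpa [mul_assoc] using h2
      · exact Or.inl ⟨h b a hb ha, hb⟩
    omega

private lemma aux_exists_b {B : Type*} [Group B]
    (hB : IsCyclic B ∨ ∃ m, 2 ≤ m ∧ Nonempty (B ≃* DihedralGroup m)) :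
    ∃ b : B, (Subgroup.zpowers b).Normal ∧ (Subgroup.zpowers b).index ≤ 2 := by
  rcases hB with hB | ⟨m, hm, ⟨e⟩⟩
  · obtain ⟨b, hb⟩ := IsCyclic.exists_generator (α := B)
    have htop : Subgroup.zpowers b = ⊤ := (Subgroup.eq_top_iff' _).2 hb
    refine ⟨b, ?_, ?_⟩ <;> rw [htop]
    · infer_instance
    · simp [Subgroup.index_top]
  · haveI : NeZero m := ⟨by omega⟩
    set b := e.symm (DihedralGroup.r 1) with hb
    have hpow : ∀ k : ℕ, b ^ k = e.symm (DihedralGroup.r (k : ZMod m)) := by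
      intro k
      rw [hb, ← map_pow, DihedralGroup.r_one_pow]
    have hmem : ∀ g : B, g ∈ Subgroup.zpowers b ↔
        ∃ i : ZMod m, e g = DihedralGroup.r i := by
      intro g
      constructor
      · intro hg
        obtain ⟨k, rfl⟩ := Subgroup.mem_zpowers_iff.1 hg
        have hk : e (b ^ k) = (DihedralGroup.r 1 : DihedralGroup m) ^ k := by
          rw [map_zpow, hb, MulEquiv.apply_symm_apply]
        rcases k with k | k
        · refine ⟨(k : ZMod m), ?_⟩
          rw [hk]
          show (DihedralGroup.r 1 : DihedralGroup m) ^ (k : ℤ) = DihedralGroup.r (k : ZMod m)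
          rw [zpow_natCast, DihedralGroup.r_one_pow]
        · refine ⟨-((k+1 : ℕ) : ZMod m), ?_⟩
          rw [hk, zpow_negSucc, DihedralGroup.r_one_pow]
          rfl
      · rintro ⟨i, hi⟩
        refine Subgroup.mem_zpowers_iff.2 ⟨(i.val : ℤ), ?_⟩
        rw [zpow_natCast, hpow, ZMod.natCast_rightInverse i, ← hi, MulEquiv.symm_apply_apply]
    refine ⟨b, ?_, ?_⟩
    · constructor
      intro x hx g
      obtain ⟨i, hi⟩ := (hmem x).1 hx
      apply (hmem _).2
      have hrw : e (g * x * g⁻¹) = e g * DihedralGroup.r i * (e g)⁻¹ := by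
        rw [map_mul, map_mul, map_inv, hi]
      cases hw : e g with
      | r j =>
        refine ⟨i, ?_⟩
        rw [hrw, hw]
        show DihedralGroup.r j * DihedralGroup.r i * DihedralGroup.r (-j) = DihedralGroup.r i
        rw [DihedralGroup.r_mul_r, DihedralGroup.r_mul_r]
        congr 1; ring
      | sr j =>
        refine ⟨-i, ?_⟩
        rw [hrw, hw]
        show DihedralGroup.sr j * DihedralGroup.r i * DihedralGroup.sr j = DihedralGroup.r (-i)
        rw [DihedralGroup.sr_mul_r, DihedralGroup.sr_mul_sr]
        congr 1; ring
    · apply aux_index_le_two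
      intro a c ha hc
      have ha' : ∃ i, e a = DihedralGroup.sr i := by
        cases h : e a with
        | r i => exact absurd ((hmem a).2 ⟨i, h⟩) ha
        | sr i => exact ⟨i, rfl⟩
      have hc' : ∃ i, e c = DihedralGroup.sr i := by
        cases h : e c with
        | r i => exact absurd ((hmem c).2 ⟨i, h⟩) hc
        | sr i => exact ⟨i, rfl⟩
      obtain ⟨i, hi⟩ := ha'
      obtain ⟨j, hj⟩ := hc'
      exact (hmem _).2 ⟨j - i, by rw [map_mul, hi, hj, DihedralGroup.sr_mul_sr]⟩

private lemma aux_main {G : Type*} [Group G] (F : Subgroup G) [F.Normal] (K : Subgroup G)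
    (hKn : K.Normal)
    (hc1 : ∀ y ∈ F, y ∈ K → ∀ a ∈ K, a * y = y * a)
    (hB : IsCyclic (G ⧸ F) ∨ ∃ m, 2 ≤ m ∧ Nonempty ((G ⧸ F) ≃* DihedralGroup m)) :
    ∃ N : Subgroup G, N.Normal ∧ IsMulCommutative N ∧ N.index ≤ K.index * 2 := by
  obtain ⟨b, hbn, hbidx⟩ := aux_exists_b hB
  set P : Subgroup G := Subgroup.comap (QuotientGroup.mk' F) (Subgroup.zpowers b) with hP
  have hPn : P.Normal := hbn.comap _
  have hPidx : P.index ≤ 2 := by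
    rw [hP, Subgroup.index_comap_of_surjective _ (QuotientGroup.mk'_surjective F)]
    exact hbidx
  refine ⟨K ⊓ P, ?_, ?_, ?_⟩
  · constructor
    intro x hx g
    rw [Subgroup.mem_inf] at hx ⊢
    exact ⟨hKn.conj_mem x hx.1 g, hPn.conj_mem x hx.2 g⟩
  · haveI : IsCyclic (Subgroup.zpowers b) := by
      refine ⟨⟨⟨b, Subgroup.mem_zpowers b⟩, ?_⟩⟩
      rintro ⟨y, hy⟩
      obtain ⟨k, hk⟩ := Subgroup.mem_zpowers_iff.1 hy
      exact Subgroup.mem_zpowers_iff.2 ⟨k, Subtype.ext (by simpa using hk)⟩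
    have hsub : ∀ a : (K ⊓ P : Subgroup G), (QuotientGroup.mk' F) ((a : G)) ∈ Subgroup.zpowers b :=
      fun a => (Subgroup.mem_inf.1 a.2).2
    set f : (K ⊓ P : Subgroup G) →* Subgroup.zpowers b :=
      ((QuotientGroup.mk' F).comp (K ⊓ P).subtype).codRestrict _ hsub with hf
    have hker : f.ker ≤ Subgroup.center (K ⊓ P : Subgroup G) := by
      intro u hu
      rw [Subgroup.mem_center_iff]
      intro v
      have huF : (u : G) ∈ F := by
        have h1 : ((f u : Subgroup.zpowers b) : G ⧸ F) = 1 := by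
          rw [MonoidHom.mem_ker.1 hu]; rfl
        have h2 : (QuotientGroup.mk' F) ((u : G)) = 1 := h1
        exact (QuotientGroup.eq_one_iff _).1 h2
      exact Subtype.ext (hc1 (u : G) huF (Subgroup.mem_inf.1 u.2).1 (v : G)
        (Subgroup.mem_inf.1 v.2).1)
    have hcomm := commutative_of_cyclic_center_quotient f hker
    exact ⟨⟨fun a c => hcomm a c⟩⟩
  · calc (K ⊓ P).index ≤ K.index * P.index := Subgroup.index_inf_le
    _ ≤ K.index * 2 := Nat.mul_le_mul le_rfl hPidx

private lemma aux_centralizer {G : Type*} [Group G] (F : Subgroup G) (x : F)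
    (hconj : ∀ g : G, g * (x : G) * g⁻¹ = (x : G) ∨ g * (x : G) * g⁻¹ = (x : G)⁻¹)
    (hcent : ∀ y : F, (y : G) * (x : G) = (x : G) * (y : G) → y ∈ Subgroup.zpowers x) :
    ∃ K : Subgroup G, K.Normal ∧ K.index ≤ 2 ∧
      ∀ y ∈ F, y ∈ K → ∀ a ∈ K, a * y = y * a := by
  set K := Subgroup.centralizer {(x : G)} with hK
  have hmem : ∀ g : G, g ∈ K ↔ (x : G) * g = g * (x : G) := by
    intro g
    rw [hK, Subgroup.mem_centralizer_iff]
    simp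
  have hflip : ∀ g : G, g ∉ K → g * (x : G) * g⁻¹ = (x : G)⁻¹ := by
    intro g hg
    rcases hconj g with h | h
    · refine absurd ((hmem g).2 ?_) hg
      conv_lhs => rw [← h]
      group
    · exact h
  refine ⟨K, ?_, ?_, ?_⟩
  · constructor
    intro k hk g
    rw [hmem] at hk ⊢
    obtain ⟨z, hz, hzk⟩ : ∃ z : G, g⁻¹ * (x : G) * g = z ∧ z * k = k * z := by
      rcases hconj g⁻¹ with h | h <;> rw [inv_inv] at h
      · exact ⟨(x : G), h, hk⟩
      · refine ⟨(x : G)⁻¹, h, ?_⟩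
        have hcom : Commute (x : G) k := hk
        exact hcom.inv_left.eq
    calc (x : G) * (g * k * g⁻¹) = g * ((g⁻¹ * (x : G) * g) * k) * g⁻¹ := by group
      _ = g * (k * (g⁻¹ * (x : G) * g)) * g⁻¹ := by rw [hz, hzk]
      _ = (g * k * g⁻¹) * (x : G) := by group
  · apply aux_index_le_two
    intro a c ha hc
    have ha' := hflip a ha
    have hc' := hflip c hc
    have step1 : a⁻¹ * (x : G)⁻¹ * a = (x : G) := by
      rw [← ha']; group
    have ha2 : a⁻¹ * (x : G) * a = (x : G)⁻¹ := by
      have h0 := congrArg Inv.inv step1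
      rw [← h0]; group
    rw [hmem]
    calc (x : G) * (a * c) = a * (a⁻¹ * (x : G) * a) * c := by group
      _ = a * (x : G)⁻¹ * c := by rw [ha2]
      _ = a * (c * (x : G) * c⁻¹) * c := by rw [hc']
      _ = (a * c) * (x : G) := by group
  · intro y hyF hyK a haK
    have hy' : (⟨y, hyF⟩ : F) ∈ Subgroup.zpowers x := by
      apply hcent
      exact ((hmem y).1 hyK).symm
    obtain ⟨k, hk⟩ := Subgroup.mem_zpowers_iff.1 hy'
    have hk' : (x : G) ^ k = y := by
      have := congrArg (Subtype.val) hk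
      simpa using this
    have hax : Commute (x : G) a := (hmem a).1 haK
    have h3 := (hax.zpow_left k).eq
    rw [hk'] at h3
    exact h3.symm

/-- Let `G` be a finite group with a normal subgroup `F` such that `F` and `G ⧸ F` are each
cyclic or dihedral, and suppose that for every `h ∈ F` generating a characteristic cyclic
subgroup `⟨h⟩` of `F`, every `g ∈ G` conjugates `h` to `h` or `h⁻¹`. Then `G` contains a
normal abelian subgroup of index at most 32. -/
theorem stmt_19 {G : Type*} [Group G] [Finite G] (F : Subgroup G) (hFn : F.Normal)
    (hF : IsCyclic F ∨ ∃ n, 2 ≤ n ∧ Nonempty (F ≃* DihedralGroup n))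
    (hB : IsCyclic (G ⧸ F) ∨ ∃ m, 2 ≤ m ∧ Nonempty ((G ⧸ F) ≃* DihedralGroup m))
    (hconj : ∀ h : F, (Subgroup.zpowers h).Characteristic →
      ∀ g : G, g * (h : G) * g⁻¹ = (h : G) ∨ g * (h : G) * g⁻¹ = (h : G)⁻¹) :
    ∃ N : Subgroup G, N.Normal ∧ IsMulCommutative N ∧ N.index ≤ 32 := by
  have key : ∃ K : Subgroup G, K.Normal ∧ K.index ≤ 16 ∧
      ∀ y ∈ F, y ∈ K → ∀ a ∈ K, a * y = y * a := by
    rcases hF with hFc | ⟨n, hn, ⟨e⟩⟩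
    · -- F cyclic
      obtain ⟨x, hgen⟩ := IsCyclic.exists_generator (α := F)
      have htop : Subgroup.zpowers x = ⊤ := (Subgroup.eq_top_iff' _).2 hgen
      have hchar : (Subgroup.zpowers x).Characteristic := by
        rw [htop]; infer_instance
      obtain ⟨K, h1, h2, h3⟩ := aux_centralizer F x (hconj x hchar) (fun y _ => hgen y)
      exact ⟨K, h1, by omega, h3⟩
    · rcases Nat.lt_or_ge n 3 with h3 | h3
      · -- F is the Klein four-group (n = 2)
        have hn2 : n = 2 := by omega
        subst hn2
        haveI := hFn
        classical
        haveI : Fintype F := Fintype.ofFinite _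
        refine ⟨(MulAut.conjNormal : G →* MulAut F).ker, MonoidHom.normal_ker _, ?_, ?_⟩
        · rw [Subgroup.index_ker]
          have hJ : ∃ J : MulAut F → Equiv.Perm {y : F // ¬ y = 1},
              Function.Injective J := by
            refine ⟨fun φ => φ.toEquiv.subtypeEquiv (fun y => not_congr ?_), ?_⟩
            · constructor
              · intro hy
                rw [hy]
                exact map_one φ
              · intro hy
                have h5 := congrArg φ.symm hy
                simpa using h5
            · intro φ ψ hφψ
              ext y
              by_cases hy : y = 1
              · rw [hy, map_one, map_one]
              · have h6 := congrArg
                  (fun p : Equiv.Perm {y : F // ¬ y = 1} => ((p ⟨y, hy⟩ : _) : F)) hφψ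
                simpa using h6
          obtain ⟨J, hJinj⟩ := hJ
          have hinj2 : Function.Injective
              (fun g : (MulAut.conjNormal : G →* MulAut F).range => J g.1) :=
            hJinj.comp Subtype.val_injective
          have hle := Nat.card_le_card_of_injective _ hinj2
          have hcardF : Fintype.card F = 4 := by
            have h7 := Nat.card_congr e.toEquiv
            rw [Nat.card_eq_fintype_card, Nat.card_eq_fintype_card, DihedralGroup.card] at h7
            omega
          have hcT : Fintype.card {y : F // ¬ y = 1} = 3 := by
            rw [Fintype.card_subtype_compl, Fintype.card_subtype_eq, hcardF]
          have hT : Nat.card (Equiv.Perm {y : F // ¬ y = 1}) = 6 := by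
            rw [Nat.card_eq_fintype_card, Fintype.card_perm, hcT]
            rfl
          omega
        · intro y hy hyK a ha
          have h1 : (MulAut.conjNormal : G →* MulAut F) a = 1 := MonoidHom.mem_ker.1 ha
          have h2 := congrArg (fun φ : MulAut F => ((φ ⟨y, hy⟩ : F) : G)) h1
          simp only [MulAut.conjNormal_apply, MulAut.one_apply] at h2
          calc a * y = (a * y * a⁻¹) * a := by group
            _ = y * a := by rw [h2]
      · -- F dihedral with n ≥ 3
        haveI : NeZero n := ⟨by omega⟩
        set x : F := e.symm (DihedralGroup.r 1) with hx
        have hex : e x = DihedralGroup.r 1 := e.apply_symm_apply _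
        have hxpow : ∀ i : ZMod n, x ^ (i.val) = e.symm (DihedralGroup.r i) := by
          intro i
          rw [hx, ← map_pow, DihedralGroup.r_one_pow, ZMod.natCast_rightInverse i]
        have hordx : orderOf x = n := by
          have h1 : orderOf (e x) = orderOf x := by
            simpa using orderOf_injective e.toMonoidHom e.injective x
          rw [hex, DihedralGroup.orderOf_r_one] at h1
          exact h1.symm
        have hchar : (Subgroup.zpowers x).Characteristic := by
          rw [Subgroup.characteristic_iff_map_le]
          intro φ
          rw [MonoidHom.map_zpowers]
          simp only [MulEquiv.coe_toMonoidHom]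
          rw [Subgroup.zpowers_le]
          have hord : orderOf (e (φ x)) = n := by
            have h1 : orderOf (e (φ x)) = orderOf (φ x) := by
              simpa using orderOf_injective e.toMonoidHom e.injective (φ x)
            have h2 : orderOf (φ x) = orderOf x := by
              simpa using orderOf_injective φ.toMonoidHom φ.injective x
            rw [h1, h2, hordx]
          cases hw : e (φ x) with
          | r i =>
            have hφx : φ x = x ^ i.val := by
              rw [hxpow, ← hw, MulEquiv.symm_apply_apply]
            rw [hφx]
            exact pow_mem (Subgroup.mem_zpowers x) _
          | sr i =>
            rw [hw, DihedralGroup.orderOf_sr] at hord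
            omega
        have hcent : ∀ y : F, (y : G) * (x : G) = (x : G) * (y : G) →
            y ∈ Subgroup.zpowers x := by
          intro y hy
          have hy2 : y * x = x * y := Subtype.ext (by simpa using hy)
          have hy3 : e y * DihedralGroup.r 1 = DihedralGroup.r 1 * e y := by
            rw [← hex, ← map_mul, ← map_mul, hy2]
          cases hw : e y with
          | r i =>
            have h4 : y = x ^ i.val := by rw [hxpow, ← hw, MulEquiv.symm_apply_apply]
            rw [h4]
            exact pow_mem (Subgroup.mem_zpowers x) _
          | sr i =>
            rw [hw, DihedralGroup.sr_mul_r, DihedralGroup.r_mul_sr] at hy3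
            have h4 : (i + 1 : ZMod n) = i - 1 := by
              injection hy3
            have h5 : ((2 : ℕ) : ZMod n) = 0 := by
              push_cast
              linear_combination h4
            have h6 : n ∣ 2 := (ZMod.natCast_eq_zero_iff 2 n).1 h5
            have h7 := Nat.le_of_dvd (by norm_num) h6
            omega
        obtain ⟨K, h1, h2, h3⟩ := aux_centralizer F x (hconj x hchar) hcent
        exact ⟨K, h1, by omega, h3⟩
  obtain ⟨K, hKn, hKi, hc1⟩ := key
  haveI := hFn
  obtain ⟨N, hNn, hNc, hNi⟩ := aux_main F K hKn hc1 hB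
  refine ⟨N, hNn, hNc, le_trans hNi ?_⟩
  calc K.index * 2 ≤ 16 * 2 := Nat.mul_le_mul hKi le_rfl
    _ = 32 := by norm_num
end
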